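/- arXiv:0808.0377 — 7 statements merged into one kernel-verified Lean document; each statement's English description precedes it below -/
import Mathlib

section
/- Let $G$ and $H$ be finite non-abelian groups with isomorphic non-commuting graphs. If $|G| = |H|$, then the multisets of centralizer orders $\{|C_G(g)| : g \in G \setminus Z(G)\}$ and $\{|C_H(h)| : h \in H \setminus Z(H)\}$ (counted with multiplicity) are equal. -/
/-- The non-commuting graph of a group `G`: vertices are the non-central
elements of `G`, and two vertices are adjacent iff they do not commute. -/
def noncommutingGraph (G : Type*) [Group G] :
    SimpleGraph {x : G // x ∉ Subgroup.center G} where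
  Adj a b := ¬ Commute (a : G) (b : G)
  symm := ⟨fun _ _ h hc => h hc.symm⟩
  loopless := ⟨fun a h => h (Commute.refl (a : G))⟩

open scoped Classical in
theorem centralizer_nat_card_add_nbr (G : Type*) [Group G] [Fintype G]
    (v : {x : G // x ∉ Subgroup.center G}) :
    Nat.card (Subgroup.centralizer ({(v : G)} : Set G)) +
      Nat.card ((noncommutingGraph G).neighborSet v) = Fintype.card G := by
  have e1 : (Subgroup.centralizer ({(v : G)} : Set G) : Type _) ≃
      {x : G // Commute (v : G) x} := by
    refine Equiv.subtypeEquivRight fun x => ?_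
    rw [Subgroup.mem_centralizer_singleton_iff]
    exact ⟨fun h => h.symm, fun h => h.symm⟩
  have e2 : ((noncommutingGraph G).neighborSet v) ≃
      {x : G // ¬ Commute (v : G) x} := by
    refine ⟨fun w => ⟨(w : {x : G // x ∉ Subgroup.center G}),
        ((noncommutingGraph G).mem_neighborSet v _).mp w.2⟩,
      fun x => ⟨⟨x, fun hx => x.2 ?_⟩, ?_⟩, fun w => rfl, fun x => rfl⟩
    · exact (Subgroup.mem_center_iff.mp hx) (v : G)
    · exact ((noncommutingGraph G).mem_neighborSet v _).mpr x.2
  rw [Nat.card_congr e1, Nat.card_congr e2, Nat.card_eq_fintype_card,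
    Nat.card_eq_fintype_card]
  rw [← Fintype.card_sum, Fintype.card_congr (Equiv.sumCompl _)]

open scoped Classical in
theorem centralizer_orders_multiset_eq_of_noncommuting_graph_iso
    {G H : Type*} [Group G] [Group H] [Fintype G] [Fintype H]
    (hG : ¬ ∀ x y : G, x * y = y * x) (hH : ¬ ∀ x y : H, x * y = y * x)
    (φ : noncommutingGraph G ≃g noncommutingGraph H)
    (hcard : Fintype.card G = Fintype.card H) :
    Multiset.map (fun g => Nat.card (Subgroup.centralizer ({g} : Set G)))
      ((Finset.univ.filter (fun g : G => g ∉ Subgroup.center G)).val) =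
    Multiset.map (fun h => Nat.card (Subgroup.centralizer ({h} : Set H)))
      ((Finset.univ.filter (fun h : H => h ∉ Subgroup.center H)).val) := by
  have hGval : (Finset.univ.filter (fun g : G => g ∉ Subgroup.center G)).val =
      Multiset.map Subtype.val
        (Finset.univ : Finset {x : G // x ∉ Subgroup.center G}).val := by
    exact (Finset.univ_val_map_subtype_val _).symm
  have hHval : (Finset.univ.filter (fun h : H => h ∉ Subgroup.center H)).val =
      Multiset.map Subtype.val
        (Finset.univ : Finset {x : H // x ∉ Subgroup.center H}).val := by
    exact (Finset.univ_val_map_subtype_val _).symm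
  have hHuniv : (Finset.univ : Finset {x : H // x ∉ Subgroup.center H}).val =
      Multiset.map φ.toEquiv
        (Finset.univ : Finset {x : G // x ∉ Subgroup.center G}).val := by
    rw [← Finset.map_univ_equiv φ.toEquiv]
    rfl
  rw [hGval, hHval, hHuniv, Multiset.map_map, Multiset.map_map, Multiset.map_map]
  apply Multiset.map_congr rfl
  intro v _
  simp only [Function.comp_apply]
  have hre : (φ.toEquiv v : H) = (φ v : H) := rfl
  rw [hre]
  have h1 := centralizer_nat_card_add_nbr G v
  have h2 := centralizer_nat_card_add_nbr H (φ v)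
  have hnbr : Nat.card ((noncommutingGraph G).neighborSet v) =
      Nat.card ((noncommutingGraph H).neighborSet (φ v)) :=
    Nat.card_congr (φ.mapNeighborSet v)
  omega
end

section
/- Let $G$ and $H$ be finite non-abelian groups with isomorphic non-commuting graphs. If $G$ is an AC-group, then $H$ is also an AC-group. -/
/-- A non-abelian group is an AC-group if the centralizer of every
non-central element is abelian. -/
def IsACGroup (G : Type*) [Group G] : Prop :=
  (¬ ∀ x y : G, x * y = y * x) ∧
    ∀ x : G, x ∉ Subgroup.center G →
      ∀ a ∈ Subgroup.centralizer {x}, ∀ b ∈ Subgroup.centralizer {x}, a * b = b * a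

theorem isACGroup_of_noncommuting_graph_iso
    {G H : Type*} [Group G] [Group H] [Finite G] [Finite H]
    (hG : ¬ ∀ x y : G, x * y = y * x) (hH : ¬ ∀ x y : H, x * y = y * x)
    (φ : noncommutingGraph G ≃g noncommutingGraph H)
    (hAC : IsACGroup G) :
    IsACGroup H := by
  refine ⟨hH, ?_⟩
  intro x hx a ha b hb
  rw [Subgroup.mem_centralizer_singleton_iff] at ha hb
  by_cases hca : a ∈ Subgroup.center H
  · exact ((Subgroup.mem_center_iff.mp hca) b).symm
  by_cases hcb : b ∈ Subgroup.center H
  · exact Subgroup.mem_center_iff.mp hcb a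
  -- all three are vertices of the non-commuting graph of H
  set X : {z : H // z ∉ Subgroup.center H} := ⟨x, hx⟩
  set A : {z : H // z ∉ Subgroup.center H} := ⟨a, hca⟩
  set B : {z : H // z ∉ Subgroup.center H} := ⟨b, hcb⟩
  have hAX : ¬ (noncommutingGraph H).Adj A X := fun h => h ha
  have hBX : ¬ (noncommutingGraph H).Adj B X := fun h => h hb
  have hAX' : ¬ (noncommutingGraph G).Adj (φ.symm A) (φ.symm X) := by
    rw [φ.symm.map_adj_iff] ; exact hAX
  have hBX' : ¬ (noncommutingGraph G).Adj (φ.symm B) (φ.symm X) := by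
    rw [φ.symm.map_adj_iff] ; exact hBX
  have ha' : Commute ((φ.symm A : {z : G // z ∉ Subgroup.center G}) : G)
      ((φ.symm X : {z : G // z ∉ Subgroup.center G}) : G) := not_not.mp hAX'
  have hb' : Commute ((φ.symm B : {z : G // z ∉ Subgroup.center G}) : G)
      ((φ.symm X : {z : G // z ∉ Subgroup.center G}) : G) := not_not.mp hBX'
  have hAB' : ((φ.symm A : {z : G // z ∉ Subgroup.center G}) : G) *
      ((φ.symm B : {z : G // z ∉ Subgroup.center G}) : G) =
      ((φ.symm B : {z : G // z ∉ Subgroup.center G}) : G) *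
      ((φ.symm A : {z : G // z ∉ Subgroup.center G}) : G) := by
    refine hAC.2 ((φ.symm X : {z : G // z ∉ Subgroup.center G}) : G)
      (φ.symm X).2 _ ?_ _ ?_
    · exact Subgroup.mem_centralizer_singleton_iff.mpr ha'.eq
    · exact Subgroup.mem_centralizer_singleton_iff.mpr hb'.eq
  have hAB : ¬ (noncommutingGraph G).Adj (φ.symm A) (φ.symm B) :=
    fun h => h hAB'
  have : ¬ (noncommutingGraph H).Adj A B := by
    rw [← φ.symm.map_adj_iff] ; exact hAB
  exact not_not.mp this
end

section
/- Let $q > 3$ be a prime power and let $G$ be a group whose non-commuting graph is isomorphic (as a graph) to the non-commuting graph of the general linear group $\mathrm{GL}(2,q)$. Then $G$ is an AC-group. -/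
section Aux

variable {F : Type*} [Field F]

/-- A 2×2 matrix commuting with a non-scalar matrix is a polynomial in it. -/
lemma span_of_commute (A B : Matrix (Fin 2) (Fin 2) F)
    (hA : ¬ (A 0 1 = 0 ∧ A 1 0 = 0 ∧ A 0 0 = A 1 1))
    (h : A * B = B * A) :
    ∃ α β : F, B = α • (1 : Matrix (Fin 2) (Fin 2) F) + β • A := by
  have e00 := congrFun (congrFun h 0) 0
  have e01 := congrFun (congrFun h 0) 1
  have e10 := congrFun (congrFun h 1) 0
  simp [Matrix.mul_apply, Fin.sum_univ_two] at e00 e01 e10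
  by_cases hb : A 0 1 = 0
  · by_cases hc : A 1 0 = 0
    · have had : A 0 0 ≠ A 1 1 := fun had => hA ⟨hb, hc, had⟩
      have hd : A 0 0 - A 1 1 ≠ 0 := sub_ne_zero.2 had
      refine ⟨B 0 0 - (B 0 0 - B 1 1) / (A 0 0 - A 1 1) * A 0 0,
        (B 0 0 - B 1 1) / (A 0 0 - A 1 1), ?_⟩
      have hq : B 0 1 = 0 := by
        have h1 : A 0 0 * B 0 1 = B 0 1 * A 1 1 := by
          simpa [hb, hc] using e01
        have h2 : B 0 1 * (A 0 0 - A 1 1) = 0 := by linear_combination h1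
        rcases mul_eq_zero.1 h2 with h3 | h3
        · exact h3
        · exact absurd (by linear_combination h3) had
      have hr : B 1 0 = 0 := by
        have h1 : A 1 1 * B 1 0 = B 1 0 * A 0 0 := by
          simpa [hb, hc] using e10
        have h2 : B 1 0 * (A 0 0 - A 1 1) = 0 := by linear_combination -h1
        rcases mul_eq_zero.1 h2 with h3 | h3
        · exact h3
        · exact absurd (by linear_combination h3) had
      ext i j
      fin_cases i <;> fin_cases j
      · simp only [Matrix.add_apply, Matrix.smul_apply, Matrix.one_apply, smul_eq_mul]
        norm_num
      · simp [Matrix.one_apply, hq, hb]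
      · simp [Matrix.one_apply, hr, hc]
      · simp only [Matrix.add_apply, Matrix.smul_apply, Matrix.one_apply, smul_eq_mul]
        norm_num
        field_simp
        ring
    · refine ⟨B 0 0 - B 1 0 / A 1 0 * A 0 0, B 1 0 / A 1 0, ?_⟩
      ext i j
      fin_cases i <;> fin_cases j
      · simp only [Matrix.add_apply, Matrix.smul_apply, Matrix.one_apply, smul_eq_mul]
        norm_num
      · simp only [Matrix.add_apply, Matrix.smul_apply, Matrix.one_apply, smul_eq_mul]
        norm_num
        field_simp
        linear_combination -e00
      · simp only [Matrix.add_apply, Matrix.smul_apply, Matrix.one_apply, smul_eq_mul]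
        norm_num
        field_simp
      · simp only [Matrix.add_apply, Matrix.smul_apply, Matrix.one_apply, smul_eq_mul]
        norm_num
        field_simp
        linear_combination -e10
  · refine ⟨B 0 0 - B 0 1 / A 0 1 * A 0 0, B 0 1 / A 0 1, ?_⟩
    ext i j
    fin_cases i <;> fin_cases j
    · simp only [Matrix.add_apply, Matrix.smul_apply, Matrix.one_apply, smul_eq_mul]
      norm_num
    · simp only [Matrix.add_apply, Matrix.smul_apply, Matrix.one_apply, smul_eq_mul]
      norm_num
      field_simp
    · simp only [Matrix.add_apply, Matrix.smul_apply, Matrix.one_apply, smul_eq_mul]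
      norm_num
      field_simp
      linear_combination e00
    · simp only [Matrix.add_apply, Matrix.smul_apply, Matrix.one_apply, smul_eq_mul]
      norm_num
      field_simp
      linear_combination e01

lemma commute_of_commute_nonscalar (A B C : Matrix (Fin 2) (Fin 2) F)
    (hA : ¬ (A 0 1 = 0 ∧ A 1 0 = 0 ∧ A 0 0 = A 1 1))
    (hB : A * B = B * A) (hC : A * C = C * A) : B * C = C * B := by
  obtain ⟨α, β, rfl⟩ := span_of_commute A B hA hB
  obtain ⟨γ, δ, rfl⟩ := span_of_commute A C hA hC
  simp only [add_mul, mul_add, Matrix.smul_mul, Matrix.mul_smul, one_mul, mul_one,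
    smul_smul]
  rw [mul_comm γ α, mul_comm δ α, mul_comm γ β, mul_comm δ β]
  abel

lemma nonscalar_of_noncentral (u : Matrix.GeneralLinearGroup (Fin 2) F)
    (hu : u ∉ Subgroup.center (Matrix.GeneralLinearGroup (Fin 2) F)) :
    ¬ ((u : Matrix (Fin 2) (Fin 2) F) 0 1 = 0 ∧
       (u : Matrix (Fin 2) (Fin 2) F) 1 0 = 0 ∧
       (u : Matrix (Fin 2) (Fin 2) F) 0 0 = (u : Matrix (Fin 2) (Fin 2) F) 1 1) := by
  rintro ⟨hb, hc, had⟩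
  apply hu
  rw [Subgroup.mem_center_iff]
  intro g
  have hscal : (u : Matrix (Fin 2) (Fin 2) F) =
      (u : Matrix (Fin 2) (Fin 2) F) 0 0 • (1 : Matrix (Fin 2) (Fin 2) F) := by
    ext i j
    fin_cases i <;> fin_cases j <;> simp [Matrix.one_apply, hb, hc, had.symm]
  apply Units.ext
  rw [Units.val_mul, Units.val_mul, hscal, Matrix.mul_smul, Matrix.smul_mul,
    mul_one, one_mul]

/-- GL(2, F) has the AC-property: elements commuting with a fixed
non-central element commute with each other. -/
lemma gl_ac (u v w : Matrix.GeneralLinearGroup (Fin 2) F)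
    (hu : u ∉ Subgroup.center (Matrix.GeneralLinearGroup (Fin 2) F))
    (huv : Commute u v) (huw : Commute u w) : Commute v w := by
  have h1 : (u : Matrix (Fin 2) (Fin 2) F) * (v : Matrix (Fin 2) (Fin 2) F) =
      (v : Matrix (Fin 2) (Fin 2) F) * (u : Matrix (Fin 2) (Fin 2) F) := by
    have := congrArg Units.val huv
    simpa using this
  have h2 : (u : Matrix (Fin 2) (Fin 2) F) * (w : Matrix (Fin 2) (Fin 2) F) =
      (w : Matrix (Fin 2) (Fin 2) F) * (u : Matrix (Fin 2) (Fin 2) F) := by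
    have := congrArg Units.val huw
    simpa using this
  have h3 := commute_of_commute_nonscalar (u : Matrix (Fin 2) (Fin 2) F)
    (v : Matrix (Fin 2) (Fin 2) F) (w : Matrix (Fin 2) (Fin 2) F)
    (nonscalar_of_noncentral u hu) h1 h2
  apply Units.ext
  simpa using h3

/-- A non-central element of GL(2,F). -/
def badUnit : Matrix.GeneralLinearGroup (Fin 2) F :=
  ⟨!![1, 1; 0, 1], !![1, -1; 0, 1], by ext i j; fin_cases i <;> fin_cases j <;>
    simp [Matrix.mul_apply, Fin.sum_univ_two],
    by ext i j; fin_cases i <;> fin_cases j <;> simp [Matrix.mul_apply, Fin.sum_univ_two]⟩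

def badUnit2 : Matrix.GeneralLinearGroup (Fin 2) F :=
  ⟨!![1, 0; 1, 1], !![1, 0; -1, 1], by ext i j; fin_cases i <;> fin_cases j <;>
    simp [Matrix.mul_apply, Fin.sum_univ_two],
    by ext i j; fin_cases i <;> fin_cases j <;> simp [Matrix.mul_apply, Fin.sum_univ_two]⟩

lemma badUnit_not_central :
    (badUnit : Matrix.GeneralLinearGroup (Fin 2) F) ∉
      Subgroup.center (Matrix.GeneralLinearGroup (Fin 2) F) := by
  rw [Subgroup.mem_center_iff]
  intro h
  have h0 := h badUnit2
  have h2 := congrArg (fun m : Matrix.GeneralLinearGroup (Fin 2) F =>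
    (m : Matrix (Fin 2) (Fin 2) F) 0 0) h0
  simp only [Units.val_mul, badUnit, badUnit2] at h2
  simp [Matrix.mul_apply, Fin.sum_univ_two] at h2

end Aux

theorem isACGroup_of_noncommuting_graph_iso_gl
    (q : ℕ) (hq : IsPrimePow q) (hq3 : 3 < q)
    (F : Type*) [Field F] [Fintype F] (hF : Fintype.card F = q)
    (G : Type*) [Group G]
    (φ : noncommutingGraph G ≃g
      noncommutingGraph (Matrix.GeneralLinearGroup (Fin 2) F)) :
    IsACGroup G := by
  constructor
  · intro hcomm
    have hx := (φ.symm ⟨badUnit, badUnit_not_central⟩).2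
    apply hx
    rw [Subgroup.mem_center_iff]
    intro g
    exact hcomm g _
  · intro x hx a ha b hb
    by_cases hac : a ∈ Subgroup.center G
    · exact ((Subgroup.mem_center_iff.1 hac) b).symm
    by_cases hbc : b ∈ Subgroup.center G
    · exact (Subgroup.mem_center_iff.1 hbc) a
    have hxa : Commute x a := (Subgroup.mem_centralizer_singleton_iff.1 ha).symm
    have hxb : Commute x b := (Subgroup.mem_centralizer_singleton_iff.1 hb).symm
    set vx : {y : G // y ∉ Subgroup.center G} := ⟨x, hx⟩
    set va : {y : G // y ∉ Subgroup.center G} := ⟨a, hac⟩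
    set vb : {y : G // y ∉ Subgroup.center G} := ⟨b, hbc⟩
    have hadj_xa : ¬ (noncommutingGraph G).Adj vx va := fun h => h hxa
    have hadj_xb : ¬ (noncommutingGraph G).Adj vx vb := fun h => h hxb
    have h1 : Commute ((φ vx : _) : Matrix.GeneralLinearGroup (Fin 2) F)
        ((φ va : _) : Matrix.GeneralLinearGroup (Fin 2) F) := by
      by_contra hne
      exact hadj_xa (φ.map_adj_iff.1 hne)
    have h2 : Commute ((φ vx : _) : Matrix.GeneralLinearGroup (Fin 2) F)
        ((φ vb : _) : Matrix.GeneralLinearGroup (Fin 2) F) := by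
      by_contra hne
      exact hadj_xb (φ.map_adj_iff.1 hne)
    have h3 := gl_ac _ _ _ (φ vx).2 h1 h2
    have h4 : ¬ (noncommutingGraph (Matrix.GeneralLinearGroup (Fin 2) F)).Adj
        (φ va) (φ vb) := fun h => h h3
    have h5 : ¬ (noncommutingGraph G).Adj va vb := fun h => h4 (φ.map_adj_iff.2 h)
    exact not_not.1 h5
end

section
/- Let $q \geq 5$ be an odd prime power and let $G$ be a group whose non-commuting graph is isomorphic (as a graph) to the non-commuting graph of the special linear group $\mathrm{SL}(2,q)$. Then $G$ is an AC-group. -/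
lemma key {F : Type*} [Field F] (A B : Matrix (Fin 2) (Fin 2) F)
    (hAB : A * B = B * A) (hA : ∀ c : F, A ≠ c • 1) :
    ∃ α β : F, B = α • (1 : Matrix (Fin 2) (Fin 2) F) + β • A := by
  set a := A 0 0 with ha; set b := A 0 1 with hb; set c := A 1 0 with hc; set d := A 1 1 with hd
  set p := B 0 0 with hp; set q := B 0 1 with hq; set r := B 1 0 with hr; set s := B 1 1 with hs
  have e00 : a * p + b * r = p * a + q * c := by
    have := congrFun (congrFun hAB 0) 0
    simpa [Matrix.mul_apply, Fin.sum_univ_two] using this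
  have e01 : a * q + b * s = p * b + q * d := by
    have := congrFun (congrFun hAB 0) 1
    simpa [Matrix.mul_apply, Fin.sum_univ_two] using this
  have e10 : c * p + d * r = r * a + s * c := by
    have := congrFun (congrFun hAB 1) 0
    simpa [Matrix.mul_apply, Fin.sum_univ_two] using this
  have hns : ¬(b = 0 ∧ c = 0 ∧ a = d) := by
    rintro ⟨h1, h2, h3⟩
    apply hA a
    ext i j
    fin_cases i <;> fin_cases j <;>
      simp [Matrix.one_apply, ← ha, ← hb, ← hc, ← hd, h1, h2, h3]
  by_cases hb0 : b = 0
  · by_cases hc0 : c = 0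
    · have had : a ≠ d := fun h => hns ⟨hb0, hc0, h⟩
      have hq0 : q = 0 := by
        have : q * (a - d) = 0 := by linear_combination e01 + (p - s) * hb0
        rcases mul_eq_zero.1 this with h | h
        · exact h
        · exact absurd (sub_eq_zero.1 h) had
      have hr0 : r = 0 := by
        have : r * (a - d) = 0 := by linear_combination -e10 + (p - s) * hc0
        rcases mul_eq_zero.1 this with h | h
        · exact h
        · exact absurd (sub_eq_zero.1 h) had
      refine ⟨p - (p - s) / (a - d) * a, (p - s) / (a - d), ?_⟩
      have had' : a - d ≠ 0 := sub_ne_zero.2 had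
      ext i j
      fin_cases i <;> fin_cases j <;>
        simp [Matrix.one_apply, ← ha, ← hb, ← hc, ← hd, ← hp, ← hq, ← hr, ← hs,
          hb0, hc0, hq0, hr0] <;> field_simp <;> ring
    · refine ⟨p - r / c * a, r / c, ?_⟩
      ext i j
      fin_cases i <;> fin_cases j <;>
        simp [Matrix.one_apply, ← ha, ← hb, ← hc, ← hd, ← hp, ← hq, ← hr, ← hs] <;>
        field_simp
      · linear_combination -e00
      · linear_combination -e10
  · refine ⟨p - q / b * a, q / b, ?_⟩
    ext i j
    fin_cases i <;> fin_cases j <;>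
      simp [Matrix.one_apply, ← ha, ← hb, ← hc, ← hd, ← hp, ← hq, ← hr, ← hs] <;>
      field_simp
    · linear_combination e00
    · linear_combination e01

open Matrix in
lemma sl_centralizer_comm {F : Type*} [Field F]
    (x : Matrix.SpecialLinearGroup (Fin 2) F)
    (hx : x ∉ Subgroup.center (Matrix.SpecialLinearGroup (Fin 2) F))
    (a b : Matrix.SpecialLinearGroup (Fin 2) F)
    (hax : (x : Matrix (Fin 2) (Fin 2) F) * a = a * x)
    (hbx : (x : Matrix (Fin 2) (Fin 2) F) * b = b * x) :
    a * b = b * a := by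
  have hns : ∀ c : F, (x : Matrix (Fin 2) (Fin 2) F) ≠ c • 1 := by
    intro c hxc
    apply hx
    rw [Subgroup.mem_center_iff]
    intro g
    apply Subtype.coe_injective
    show ((g * x : Matrix.SpecialLinearGroup (Fin 2) F) : Matrix (Fin 2) (Fin 2) F) = ((x * g : Matrix.SpecialLinearGroup (Fin 2) F) : Matrix (Fin 2) (Fin 2) F)
    rw [Matrix.SpecialLinearGroup.coe_mul, Matrix.SpecialLinearGroup.coe_mul, hxc]
    simp [Matrix.smul_mul, Matrix.mul_smul]
  obtain ⟨α, β, hab⟩ := key (x : Matrix (Fin 2) (Fin 2) F) a hax hns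
  obtain ⟨γ, δ, hcd⟩ := key (x : Matrix (Fin 2) (Fin 2) F) b hbx hns
  apply Subtype.coe_injective
  show ((a * b : Matrix.SpecialLinearGroup (Fin 2) F) : Matrix (Fin 2) (Fin 2) F) = ((b * a : Matrix.SpecialLinearGroup (Fin 2) F) : Matrix (Fin 2) (Fin 2) F)
  rw [Matrix.SpecialLinearGroup.coe_mul, Matrix.SpecialLinearGroup.coe_mul, hab, hcd]
  simp only [Matrix.add_mul, Matrix.mul_add, Matrix.smul_mul, Matrix.mul_smul,
    Matrix.one_mul, Matrix.mul_one, smul_smul]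
  module

lemma sl_vertex {F : Type*} [Field F] :
    ∃ u : Matrix.SpecialLinearGroup (Fin 2) F,
      u ∉ Subgroup.center (Matrix.SpecialLinearGroup (Fin 2) F) := by
  refine ⟨⟨!![1, 1; 0, 1], by simp [Matrix.det_fin_two_of]⟩, fun hu => ?_⟩
  replace hu := Subgroup.mem_center_iff.1 hu
  have := hu ⟨!![1, 0; 1, 1], by simp [Matrix.det_fin_two_of]⟩
  have h2 := congrArg (fun m : Matrix.SpecialLinearGroup (Fin 2) F => (m : Matrix (Fin 2) (Fin 2) F) 0 0) this
  erw [Matrix.SpecialLinearGroup.coe_mul, Matrix.SpecialLinearGroup.coe_mul] at h2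
  simp [Matrix.SpecialLinearGroup.coe_mul, Matrix.mul_apply, Fin.sum_univ_two] at h2


theorem isACGroup_of_noncommuting_graph_iso_sl
    (q : ℕ) (hq : IsPrimePow q) (hq5 : 5 ≤ q) (hqo : Odd q)
    (F : Type*) [Field F] [Fintype F] (hF : Fintype.card F = q)
    (G : Type*) [Group G]
    (φ : noncommutingGraph G ≃g
      noncommutingGraph (Matrix.SpecialLinearGroup (Fin 2) F)) :
    IsACGroup G := by
  constructor
  · intro hab
    obtain ⟨u, hu⟩ := sl_vertex (F := F)
    have := (φ.symm ⟨u, hu⟩).2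
    exact this (Subgroup.mem_center_iff.2 fun g => hab g _)
  · intro x hx a ha b hb
    have hxa : Commute x a := (Subgroup.mem_centralizer_singleton_iff.1 ha).symm
    have hxb : Commute x b := (Subgroup.mem_centralizer_singleton_iff.1 hb).symm
    by_cases hac : a ∈ Subgroup.center G
    · exact (Subgroup.mem_center_iff.1 hac b).symm
    by_cases hbc : b ∈ Subgroup.center G
    · exact Subgroup.mem_center_iff.1 hbc a
    set vx : {y : G // y ∉ Subgroup.center G} := ⟨x, hx⟩
    set va : {y : G // y ∉ Subgroup.center G} := ⟨a, hac⟩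
    set vb : {y : G // y ∉ Subgroup.center G} := ⟨b, hbc⟩
    have hA : ¬ (noncommutingGraph G).Adj vx va := not_not.2 hxa
    have hB : ¬ (noncommutingGraph G).Adj vx vb := not_not.2 hxb
    have hA' : ¬ (noncommutingGraph _).Adj (φ vx) (φ va) := by
      rwa [φ.map_adj_iff]
    have hB' : ¬ (noncommutingGraph _).Adj (φ vx) (φ vb) := by
      rwa [φ.map_adj_iff]
    have h1 : Commute ((φ vx).1) ((φ va).1) := not_not.1 hA'
    have h2 : Commute ((φ vx).1) ((φ vb).1) := not_not.1 hB'
    have key := sl_centralizer_comm (φ vx).1 (φ vx).2 (φ va).1 (φ vb).1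
      (congrArg (fun m : Matrix.SpecialLinearGroup (Fin 2) F => (m : Matrix (Fin 2) (Fin 2) F)) h1)
      (congrArg (fun m : Matrix.SpecialLinearGroup (Fin 2) F => (m : Matrix (Fin 2) (Fin 2) F)) h2)
    have hAdj : ¬ (noncommutingGraph _).Adj (φ va) (φ vb) := not_not.2 key
    rw [φ.map_adj_iff] at hAdj
    exact not_not.1 hAdj
end

section
/- Let $q > 3$ be a prime power and let $G$ be a group whose non-commuting graph is isomorphic (as a graph) to the non-commuting graph of the general linear group $\mathrm{GL}(2,q)$. Then $G$ is not nilpotent. -/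
open Matrix

set_option linter.unusedSectionVars false
set_option maxHeartbeats 1000000

section GLside
variable {F : Type*} [Field F]
local notation "M2" => Matrix (Fin 2) (Fin 2) F
local notation "GLF" => Matrix.GeneralLinearGroup (Fin 2) F

private lemma m2_ext' {A B : M2} (h00 : A 0 0 = B 0 0) (h01 : A 0 1 = B 0 1)
    (h10 : A 1 0 = B 1 0) (h11 : A 1 1 = B 1 1) : A = B := by
  rw [Matrix.eta_fin_two A, Matrix.eta_fin_two B, h00, h01, h10, h11]

private lemma comm_entries {A B : M2} (h : A * B = B * A) :
    A 0 1 * B 1 0 = B 0 1 * A 1 0 ∧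
    B 0 1 * (A 0 0 - A 1 1) = A 0 1 * (B 0 0 - B 1 1) ∧
    A 1 0 * (B 0 0 - B 1 1) = B 1 0 * (A 0 0 - A 1 1) := by
  have e00 := congrFun (congrFun h 0) 0
  have e01 := congrFun (congrFun h 0) 1
  have e10 := congrFun (congrFun h 1) 0
  simp only [Matrix.mul_apply, Fin.sum_univ_two] at e00 e01 e10
  exact ⟨by linear_combination e00, by linear_combination e01, by linear_combination e10⟩

private lemma isScal_mul_comm {X : M2} (h1 : X 0 1 = 0) (h2 : X 1 0 = 0) (h3 : X 0 0 = X 1 1)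
    (Y : M2) : X * Y = Y * X := by
  have hX : X = X 0 0 • (1 : M2) := by
    apply m2_ext' <;> simp [Matrix.smul_apply, Matrix.one_apply, h1, h2, h3]
  rw [hX, smul_mul_assoc, one_mul, mul_smul_comm, mul_one]

private lemma commGL_iff {A B : GLF} :
    Commute A B ↔ (A : M2) * (B : M2) = (B : M2) * (A : M2) := by
  simp [Commute, SemiconjBy, Units.ext_iff]

private def uGL : GLF := Matrix.GeneralLinearGroup.mkOfDetNeZero !![1,1;0,1] (by
  simp [Matrix.det_fin_two])

@[simp] private lemma uGL_coe : ((uGL : GLF) : M2) = !![1,1;0,1] := rfl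

private def vGL : GLF := Matrix.GeneralLinearGroup.mkOfDetNeZero !![1,0;1,1] (by
  simp [Matrix.det_fin_two])

@[simp] private lemma vGL_coe : ((vGL : GLF) : M2) = !![1,0;1,1] := rfl

private lemma mem_center_iff_isScal' {A : GLF} :
    A ∈ Subgroup.center GLF ↔
      ((A : M2) 0 1 = 0 ∧ (A : M2) 1 0 = 0 ∧ (A : M2) 0 0 = (A : M2) 1 1) := by
  constructor
  · intro h
    have hu : ((uGL : GLF) : M2) * (A : M2) = (A : M2) * ((uGL : GLF) : M2) := by
      have := Subgroup.mem_center_iff.mp h uGL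
      rw [Units.ext_iff, Units.val_mul, Units.val_mul] at this
      exact this
    have hv : ((vGL : GLF) : M2) * (A : M2) = (A : M2) * ((vGL : GLF) : M2) := by
      have := Subgroup.mem_center_iff.mp h vGL
      rw [Units.ext_iff, Units.val_mul, Units.val_mul] at this
      exact this
    obtain ⟨r1, r2, r3⟩ := comm_entries hu
    obtain ⟨s1, s2, s3⟩ := comm_entries hv
    norm_num at r1 r2 r3 s1 s2 s3
    exact ⟨s1.symm, r1, by linear_combination -r2⟩
  · intro h
    rw [Subgroup.mem_center_iff]
    intro g
    ext i j
    have := isScal_mul_comm h.1 h.2.1 h.2.2 (g : M2)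
    rw [Units.val_mul, Units.val_mul, this]

private lemma det_ne_zero' (A : GLF) : ((A : M2)).det ≠ 0 :=
  (Matrix.isUnits_det_units A).ne_zero

private noncomputable def scalGL (c : Fˣ) : GLF :=
  Matrix.GeneralLinearGroup.mkOfDetNeZero ((c : F) • (1 : M2)) (by
    simp [Matrix.det_smul])

@[simp] private lemma scalGL_coe (c : Fˣ) : ((scalGL c : GLF) : M2) = (c : F) • (1 : M2) := rfl

private noncomputable def centerEquiv : Fˣ ≃ (Subgroup.center GLF) where
  toFun c := ⟨scalGL c, mem_center_iff_isScal'.mpr (by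
    refine ⟨?_, ?_, ?_⟩ <;> simp [Matrix.smul_apply, Matrix.one_apply])⟩
  invFun A := Units.mk0 ((A.1 : M2) 0 0) (by
    obtain ⟨h1, h2, h3⟩ := mem_center_iff_isScal'.mp A.2
    intro h0
    apply det_ne_zero' A.1
    rw [Matrix.det_fin_two, h1, h2, ← h3, h0]; ring)
  left_inv c := by
    ext
    simp [Matrix.smul_apply, Matrix.one_apply]
  right_inv A := by
    obtain ⟨h1, h2, h3⟩ := mem_center_iff_isScal'.mp A.2
    apply Subtype.ext
    apply Units.ext
    apply m2_ext' <;> simp [Matrix.smul_apply, Matrix.one_apply, h1, h2, h3]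

private def upperGL (e f : F) (he : e ≠ 0) : GLF :=
  Matrix.GeneralLinearGroup.mkOfDetNeZero !![e,f;0,e] (by
    simp [Matrix.det_fin_two, he])

@[simp] private lemma upperGL_coe (e f : F) (he : e ≠ 0) :
    ((upperGL e f he : GLF) : M2) = !![e,f;0,e] := rfl

private def diagGL (e h : F) (he : e ≠ 0) (hh : h ≠ 0) : GLF :=
  Matrix.GeneralLinearGroup.mkOfDetNeZero !![e,0;0,h] (by
    simp [Matrix.det_fin_two, he, hh])

@[simp] private lemma diagGL_coe (e h : F) (he : e ≠ 0) (hh : h ≠ 0) :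
    ((diagGL e h he hh : GLF) : M2) = !![e,0;0,h] := rfl

private def sGL (t : F) (ht : t ≠ 0) : GLF := diagGL 1 t one_ne_zero ht

@[simp] private lemma sGL_coe (t : F) (ht : t ≠ 0) : ((sGL t ht : GLF) : M2) = !![1,0;0,t] := rfl

/-- the set of noncentral elements commuting with B -/
private def ncomm (B : GLF) := {A : GLF // A ∉ Subgroup.center GLF ∧ Commute B A}

private lemma card_ne_pairs (α : Type*) [Fintype α] [DecidableEq α] :
    Nat.card {p : α × α // p.1 ≠ p.2} = Fintype.card α * Fintype.card α - Fintype.card α := by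
  have e : α ≃ {p : α × α // p.1 = p.2} :=
    ⟨fun a => ⟨(a, a), rfl⟩, fun p => p.1.1,
     fun a => rfl, fun p => Subtype.ext (Prod.ext rfl p.2)⟩
  rw [Nat.card_eq_fintype_card, Fintype.card_subtype_compl (p := fun p : α × α => p.1 = p.2)]
  rw [← Fintype.card_congr e, Fintype.card_prod]

private lemma card_units' (F' : Type*) [Field F'] [Fintype F'] :
    Nat.card {x : F' // x ≠ 0} = Fintype.card F' - 1 := by
  classical
  rw [Nat.card_eq_fintype_card, ← Fintype.card_units (α := F')]
  exact Fintype.card_congr (unitsEquivNeZero (G₀ := F')).symm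

variable [Fintype F]

private lemma ncomm_card_le (B : GLF) (hB : B ∉ Subgroup.center GLF) :
    Nat.card (ncomm B) ≤ Fintype.card F * Fintype.card F - Fintype.card F := by
  classical
  rw [← card_ne_pairs F]
  have notScal : ∀ A : ncomm B, ¬ (((A.1 : GLF) : M2) 0 1 = 0 ∧ ((A.1 : GLF) : M2) 1 0 = 0 ∧
      ((A.1 : GLF) : M2) 0 0 = ((A.1 : GLF) : M2) 1 1) :=
    fun A h => A.2.1 (mem_center_iff_isScal'.mpr h)
  have rel := fun A : ncomm B => comm_entries (commGL_iff.mp A.2.2)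
  set b := ((B : GLF) : M2) 0 1 with hbdef
  set c := ((B : GLF) : M2) 1 0 with hcdef
  set a := ((B : GLF) : M2) 0 0 with hadef
  set d := ((B : GLF) : M2) 1 1 with hddef
  by_cases hb : b = 0
  · by_cases hc : c = 0
    · have had : a ≠ d := fun h => hB (mem_center_iff_isScal'.mpr ⟨hb, hc, h⟩)
      have key : ∀ A : ncomm B, ((A.1 : GLF) : M2) 0 1 = 0 ∧ ((A.1 : GLF) : M2) 1 0 = 0 := by
        intro A
        obtain ⟨r1, r2, r3⟩ := rel A
        constructor
        · have h2 : ((A.1 : GLF) : M2) 0 1 * (a - d) = 0 := by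
            rw [hb] at r2; linear_combination r2
          rcases mul_eq_zero.mp h2 with h | h
          · exact h
          · exact absurd (sub_eq_zero.mp h) had
        · have h3 : ((A.1 : GLF) : M2) 1 0 * (a - d) = 0 := by
            rw [hc] at r3; linear_combination -r3
          rcases mul_eq_zero.mp h3 with h | h
          · exact h
          · exact absurd (sub_eq_zero.mp h) had
      apply Nat.card_le_card_of_injective (fun A : ncomm B =>
        (⟨(((A.1 : GLF) : M2) 0 0, ((A.1 : GLF) : M2) 1 1), by
          intro h
          exact notScal A ⟨(key A).1, (key A).2, h⟩⟩ : {p : F × F // p.1 ≠ p.2}))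
      intro A A' h
      simp only [Subtype.mk.injEq, Prod.mk.injEq] at h
      obtain ⟨h1, h2⟩ := h
      apply Subtype.ext; apply Units.ext
      exact m2_ext' h1 ((key A).1.trans (key A').1.symm) ((key A).2.trans (key A').2.symm) h2
    · have key : ∀ A : ncomm B, ((A.1 : GLF) : M2) 0 1 = 0 ∧
          c * ((A.1 : GLF) : M2) 1 1 = c * ((A.1 : GLF) : M2) 0 0 - ((A.1 : GLF) : M2) 1 0 * (a - d) := by
        intro A
        obtain ⟨r1, r2, r3⟩ := rel A
        rw [hb] at r1 r2
        constructor
        · have h1 : ((A.1 : GLF) : M2) 0 1 * c = 0 := by linear_combination -r1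
          rcases mul_eq_zero.mp h1 with h | h
          · exact h
          · exact absurd h hc
        · linear_combination -r3
      have key2 : ∀ A : ncomm B, ((A.1 : GLF) : M2) 1 0 ≠ 0 := by
        intro A h10
        obtain ⟨k1, k2⟩ := key A
        apply notScal A
        refine ⟨k1, h10, ?_⟩
        rw [h10] at k2
        have : c * (((A.1 : GLF) : M2) 1 1 - ((A.1 : GLF) : M2) 0 0) = 0 := by linear_combination k2
        rcases mul_eq_zero.mp this with h | h
        · exact absurd h hc
        · exact (sub_eq_zero.mp h).symm
      apply Nat.card_le_card_of_injective (fun A : ncomm B =>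
        (⟨(((A.1 : GLF) : M2) 0 0, ((A.1 : GLF) : M2) 0 0 + ((A.1 : GLF) : M2) 1 0), by
          intro h
          exact key2 A (by linear_combination -h)⟩ : {p : F × F // p.1 ≠ p.2}))
      intro A A' h
      simp only [Subtype.mk.injEq, Prod.mk.injEq] at h
      obtain ⟨h1, h2'⟩ := h
      have h2 : ((A.1 : GLF) : M2) 1 0 = ((A'.1 : GLF) : M2) 1 0 := by
        linear_combination h2' - h1
      have h3 : ((A.1 : GLF) : M2) 1 1 = ((A'.1 : GLF) : M2) 1 1 := by
        apply mul_left_cancel₀ hc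
        rw [(key A).2, (key A').2, h1, h2]
      apply Subtype.ext; apply Units.ext
      exact m2_ext' h1 ((key A).1.trans (key A').1.symm) h2 h3
  · have key : ∀ A : ncomm B, b * ((A.1 : GLF) : M2) 1 0 = ((A.1 : GLF) : M2) 0 1 * c ∧
        b * ((A.1 : GLF) : M2) 1 1 = b * ((A.1 : GLF) : M2) 0 0 - ((A.1 : GLF) : M2) 0 1 * (a - d) := by
      intro A
      obtain ⟨r1, r2, r3⟩ := rel A
      exact ⟨by linear_combination r1, by linear_combination r2⟩
    have key2 : ∀ A : ncomm B, ((A.1 : GLF) : M2) 0 1 ≠ 0 := by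
      intro A h01
      obtain ⟨k1, k2⟩ := key A
      rw [h01] at k1 k2
      apply notScal A
      refine ⟨h01, ?_, ?_⟩
      · have h1 : b * ((A.1 : GLF) : M2) 1 0 = 0 := by linear_combination k1
        rcases mul_eq_zero.mp h1 with h | h
        · exact absurd h hb
        · exact h
      · have : b * (((A.1 : GLF) : M2) 0 0 - ((A.1 : GLF) : M2) 1 1) = 0 := by linear_combination -k2
        rcases mul_eq_zero.mp this with h | h
        · exact absurd h hb
        · exact sub_eq_zero.mp h
    apply Nat.card_le_card_of_injective (fun A : ncomm B =>
      (⟨(((A.1 : GLF) : M2) 0 0, ((A.1 : GLF) : M2) 0 0 + ((A.1 : GLF) : M2) 0 1), by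
        intro h
        exact key2 A (by linear_combination -h)⟩ : {p : F × F // p.1 ≠ p.2}))
    intro A A' h
    simp only [Subtype.mk.injEq, Prod.mk.injEq] at h
    obtain ⟨h1, h2'⟩ := h
    have h2 : ((A.1 : GLF) : M2) 0 1 = ((A'.1 : GLF) : M2) 0 1 := by linear_combination h2' - h1
    have h3 : ((A.1 : GLF) : M2) 1 0 = ((A'.1 : GLF) : M2) 1 0 := by
      apply mul_left_cancel₀ hb
      rw [(key A).1, (key A').1, h2]
    have h4 : ((A.1 : GLF) : M2) 1 1 = ((A'.1 : GLF) : M2) 1 1 := by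
      apply mul_left_cancel₀ hb
      rw [(key A).2, (key A').2, h1, h2]
    apply Subtype.ext; apply Units.ext
    exact m2_ext' h1 h2 h3 h4

private lemma ncomm_card_u :
    Nat.card (ncomm (uGL : GLF)) = (Fintype.card F - 1) * (Fintype.card F - 1) := by
  classical
  have key : ∀ A : ncomm (uGL : GLF),
      ((A.1 : GLF) : M2) 1 0 = 0 ∧ ((A.1 : GLF) : M2) 0 0 = ((A.1 : GLF) : M2) 1 1 ∧
      ((A.1 : GLF) : M2) 0 0 ≠ 0 ∧ ((A.1 : GLF) : M2) 0 1 ≠ 0 := by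
    intro A
    obtain ⟨r1, r2, r3⟩ := comm_entries (commGL_iff.mp A.2.2)
    norm_num at r1 r2 r3
    have h10 : ((A.1 : GLF) : M2) 1 0 = 0 := r1
    have h0011 : ((A.1 : GLF) : M2) 0 0 = ((A.1 : GLF) : M2) 1 1 := by linear_combination -r2
    refine ⟨h10, h0011, ?_, ?_⟩
    · intro h0
      apply det_ne_zero' A.1
      rw [Matrix.det_fin_two, h10, ← h0011, h0]
      ring
    · intro h01
      exact A.2.1 (mem_center_iff_isScal'.mpr ⟨h01, h10, h0011⟩)
  rw [show (Fintype.card F - 1) * (Fintype.card F - 1)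
      = Nat.card ({x : F // x ≠ 0} × {x : F // x ≠ 0}) by
    rw [Nat.card_prod, card_units']]
  apply Nat.card_congr
  refine ⟨fun A => (⟨((A.1 : GLF) : M2) 0 0, (key A).2.2.1⟩, ⟨((A.1 : GLF) : M2) 0 1, (key A).2.2.2⟩),
    fun p => ⟨upperGL p.1.1 p.2.1 p.1.2, ?_, ?_⟩, ?_, ?_⟩
  · intro hc
    obtain ⟨h1, h2, h3⟩ := mem_center_iff_isScal'.mp hc
    norm_num at h1 h2 h3
    exact p.2.2 h1
  · rw [commGL_iff]
    apply m2_ext' <;> norm_num [Matrix.mul_apply, Fin.sum_univ_two]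
    exact add_comm _ _
  · intro A
    apply Subtype.ext; apply Units.ext
    apply m2_ext' <;> norm_num
    · exact (key A).1.symm
    · exact (key A).2.1
  · intro p
    apply Prod.ext <;> apply Subtype.ext <;> norm_num

private lemma ncomm_card_s (t : F) (ht0 : t ≠ 0) (ht1 : t ≠ 1) :
    Nat.card (ncomm (sGL t ht0 : GLF)) =
      (Fintype.card F - 1) * (Fintype.card F - 1) - (Fintype.card F - 1) := by
  classical
  have key : ∀ A : ncomm (sGL t ht0 : GLF),
      ((A.1 : GLF) : M2) 0 1 = 0 ∧ ((A.1 : GLF) : M2) 1 0 = 0 ∧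
      ((A.1 : GLF) : M2) 0 0 ≠ 0 ∧ ((A.1 : GLF) : M2) 1 1 ≠ 0 ∧
      ((A.1 : GLF) : M2) 0 0 ≠ ((A.1 : GLF) : M2) 1 1 := by
    intro A
    obtain ⟨r1, r2, r3⟩ := comm_entries (commGL_iff.mp A.2.2)
    norm_num at r1 r2 r3
    have h1t : (1 : F) - t ≠ 0 := sub_ne_zero_of_ne (Ne.symm ht1)
    have h01 : ((A.1 : GLF) : M2) 0 1 = 0 := r2.resolve_right h1t
    have h10 : ((A.1 : GLF) : M2) 1 0 = 0 := r3.resolve_right h1t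
    have hdet := det_ne_zero' A.1
    rw [Matrix.det_fin_two, h01, h10] at hdet
    simp only [mul_zero, zero_mul, sub_zero] at hdet
    refine ⟨h01, h10, fun h => hdet (by rw [h]; ring), fun h => hdet (by rw [h]; ring), ?_⟩
    intro h
    exact A.2.1 (mem_center_iff_isScal'.mpr ⟨h01, h10, h⟩)
  rw [show (Fintype.card F - 1) * (Fintype.card F - 1) - (Fintype.card F - 1)
      = Nat.card {p : Fˣ × Fˣ // p.1 ≠ p.2} by
    rw [card_ne_pairs, Fintype.card_units]]
  apply Nat.card_congr
  refine ⟨fun A => ⟨(Units.mk0 _ (key A).2.2.1, Units.mk0 _ (key A).2.2.2.1), ?_⟩,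
    fun p => ⟨diagGL (p.1.1 : F) (p.1.2 : F) (Units.ne_zero _) (Units.ne_zero _), ?_, ?_⟩, ?_, ?_⟩
  · intro h
    exact (key A).2.2.2.2 (congrArg Units.val h)
  · intro hc
    obtain ⟨h1, h2, h3⟩ := mem_center_iff_isScal'.mp hc
    norm_num at h1 h2 h3
    exact p.2 (Units.ext h3)
  · rw [commGL_iff]
    show ((sGL t ht0 : GLF) : M2) * _ = _ * ((sGL t ht0 : GLF) : M2)
    apply m2_ext' <;> norm_num [Matrix.mul_apply, Fin.sum_univ_two, sGL] <;> ring
  · intro A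
    apply Subtype.ext; apply Units.ext
    apply m2_ext' <;> norm_num
    · exact (key A).1.symm
    · exact (key A).2.1.symm
  · intro p
    apply Subtype.ext
    apply Prod.ext <;> apply Units.ext <;> norm_num

end GLside

section Gside
variable {K : Type*} [Group K]

private lemma card_split (α : Type*) [Finite α] (p : α → Prop) :
    Nat.card α = Nat.card {a // p a} + Nat.card {a // ¬ p a} := by
  classical
  rw [← Nat.card_sum]
  exact Nat.card_congr (Equiv.sumCompl p).symm

private lemma centralizer_card_split [Finite K] (y : K) :
    Nat.card (Subgroup.centralizer {y}) =
      Nat.card (Subgroup.center K) + Nat.card {w : K // w ∉ Subgroup.center K ∧ Commute y w} := by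
  classical
  have e1 : Subgroup.centralizer {y} ≃ {w : K // Commute y w} :=
    Equiv.subtypeEquivRight fun w => by
      rw [Subgroup.mem_centralizer_singleton_iff]
      exact ⟨fun h => h.symm, fun h => h.symm⟩
  rw [Nat.card_congr e1, card_split {w : K // Commute y w} (fun w => w.1 ∈ Subgroup.center K)]
  congr 1
  · apply Nat.card_congr
    exact ((Equiv.subtypeSubtypeEquivSubtypeInter (fun w : K => Commute y w)
        (fun w => w ∈ Subgroup.center K)).trans
      (Equiv.subtypeEquivRight fun w => by
        constructor
        · exact fun h => h.2
        · intro h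
          exact ⟨(Subgroup.mem_center_iff.mp h y), h⟩))
  · apply Nat.card_congr
    exact ((Equiv.subtypeSubtypeEquivSubtypeInter (fun w : K => Commute y w)
        (fun w => w ∉ Subgroup.center K)).trans
      (Equiv.subtypeEquivRight fun w => and_comm))

private lemma index_le_of_comm_center [Finite K] (x : K)
    (hx2 : ∀ g : K, x * g * x⁻¹ * g⁻¹ ∈ Subgroup.center K) :
    (Subgroup.centralizer ({x} : Set K)).index ≤ Nat.card (Subgroup.center K) := by
  classical
  set H := Subgroup.centralizer ({x} : Set K) with hH
  have hmem : ∀ g : K, g * x * g⁻¹ * x⁻¹ ∈ Subgroup.center K := by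
    intro g
    have h1 := (Subgroup.center K).inv_mem (hx2 g)
    have : (x * g * x⁻¹ * g⁻¹)⁻¹ = g * x * g⁻¹ * x⁻¹ := by group
    rwa [this] at h1
  let f : K ⧸ H → Subgroup.center K := fun q => Quotient.liftOn' q
    (fun g => (⟨g * x * g⁻¹ * x⁻¹, hmem g⟩ : Subgroup.center K)) (by
      intro a b hab
      have hc : (a⁻¹ * b) * x = x * (a⁻¹ * b) :=
        Subgroup.mem_centralizer_singleton_iff.mp (QuotientGroup.leftRel_apply.mp hab)
      apply Subtype.ext
      show a * x * a⁻¹ * x⁻¹ = b * x * b⁻¹ * x⁻¹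
      have hb : b * x = a * x * a⁻¹ * b := by
        have h : a * (a⁻¹ * b * x) = a * (x * (a⁻¹ * b)) := by rw [hc]
        calc b * x = a * (a⁻¹ * b * x) := by group
        _ = a * (x * (a⁻¹ * b)) := h
        _ = a * x * a⁻¹ * b := by group
      calc a * x * a⁻¹ * x⁻¹ = (a * x * a⁻¹ * b) * b⁻¹ * x⁻¹ := by group
      _ = (b * x) * b⁻¹ * x⁻¹ := by rw [hb])
  have hinj : Function.Injective f := by
    intro q1 q2
    induction q1 using Quotient.inductionOn' with
    | h a =>
    induction q2 using Quotient.inductionOn' with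
    | h b =>
    intro h
    have h' : a * x * a⁻¹ * x⁻¹ = b * x * b⁻¹ * x⁻¹ := congrArg Subtype.val h
    have h2 : (a⁻¹ * b) * x = x * (a⁻¹ * b) := by
      have hmm : a * x * a⁻¹ = b * x * b⁻¹ := mul_right_cancel h'
      calc (a⁻¹ * b) * x = a⁻¹ * (b * x * b⁻¹) * b := by group
      _ = a⁻¹ * (a * x * a⁻¹) * b := by rw [hmm]
      _ = x * (a⁻¹ * b) := by group
    apply Quotient.sound'
    rw [QuotientGroup.leftRel_apply]
    exact Subgroup.mem_centralizer_singleton_iff.mpr h2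
  calc H.index = Nat.card (K ⧸ H) := rfl
  _ ≤ Nat.card (Subgroup.center K) := Nat.card_le_card_of_injective f hinj

private lemma exists_Z2_elt [hn : Group.IsNilpotent K] (x0 : K) (hx0 : x0 ∉ Subgroup.center K) :
    ∃ x : K, x ∉ Subgroup.center K ∧ ∀ g : K, x * g * x⁻¹ * g⁻¹ ∈ Subgroup.center K := by
  by_contra hcon
  push_neg at hcon
  have h2le : Subgroup.upperCentralSeries K 2 ≤ Subgroup.center K := by
    intro x hx
    by_contra hxc
    obtain ⟨g, hg⟩ := hcon x hxc
    apply hg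
    have := (mem_upperCentralSeries_succ_iff (n := 1)).mp hx g
    rwa [upperCentralSeries_one] at this
  have hall : ∀ n, Subgroup.upperCentralSeries K n ≤ Subgroup.center K := by
    intro n
    induction n with
    | zero => rw [upperCentralSeries_zero]; exact bot_le
    | succ m ih =>
      intro x hx
      apply h2le
      rw [mem_upperCentralSeries_succ_iff (n := 1)]
      intro y
      rw [upperCentralSeries_one]
      exact ih ((mem_upperCentralSeries_succ_iff (n := m)).mp hx y)
  obtain ⟨n, hn⟩ := hn.nilpotent'
  exact hx0 (hall n (hn ▸ Subgroup.mem_top x0))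

end Gside

theorem not_nilpotent_of_noncommuting_graph_iso_gl
    (q : ℕ) (hq : IsPrimePow q) (hq3 : 3 < q)
    (F : Type*) [Field F] [Fintype F] (hF : Fintype.card F = q)
    (G : Type*) [Group G]
    (φ : noncommutingGraph G ≃g
      noncommutingGraph (Matrix.GeneralLinearGroup (Fin 2) F)) :
    ¬ Group.IsNilpotent G := by
  intro hnil
  classical
  -- GL side vertices are noncentral
  have hu_nc : (uGL : Matrix.GeneralLinearGroup (Fin 2) F) ∉
      Subgroup.center (Matrix.GeneralLinearGroup (Fin 2) F) := by
    intro h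
    have := (mem_center_iff_isScal'.mp h).1
    norm_num at this
  -- an element t ≠ 0, 1
  obtain ⟨t, ht0, ht1⟩ : ∃ t : F, t ≠ 0 ∧ t ≠ 1 := by
    by_contra hcon
    push_neg at hcon
    have hsub : (Finset.univ : Finset F) ⊆ {0, 1} := by
      intro x _
      rcases eq_or_ne x 0 with h | h
      · simp [h]
      · simp [hcon x h]
    have := Finset.card_le_card hsub
    rw [Finset.card_univ, hF] at this
    have h2 : ({0, 1} : Finset F).card ≤ 2 := Finset.card_insert_le _ _ |>.trans (by simp)
    omega
  have hs_nc : (sGL t ht0 : Matrix.GeneralLinearGroup (Fin 2) F) ∉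
      Subgroup.center (Matrix.GeneralLinearGroup (Fin 2) F) := by
    intro h
    have := (mem_center_iff_isScal'.mp h).2.2
    norm_num at this
    exact ht1 this.symm
  -- vertices
  set VG := {x : G // x ∉ Subgroup.center G} with hVG
  have hVGfin : Finite VG := Finite.of_equiv _ φ.toEquiv.symm
  -- G is finite
  have hGfin : Finite G := by
    set x0 : G := (φ.symm ⟨uGL, hu_nc⟩).1 with hx0
    have hx0nc : x0 ∉ Subgroup.center G := (φ.symm ⟨uGL, hu_nc⟩).2
    have hcfin : Finite (Subgroup.center G) := by
      apply Finite.of_injective (fun z : Subgroup.center G =>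
        (⟨z.1 * x0, fun hmem => hx0nc (by
          have := (Subgroup.center G).mul_mem ((Subgroup.center G).inv_mem z.2) hmem
          rwa [inv_mul_cancel_left] at this)⟩ : VG))
      intro z1 z2 h
      apply Subtype.ext
      have := congrArg Subtype.val h
      simpa using mul_right_cancel this
    exact Finite.of_equiv _ (Equiv.sumCompl (· ∈ Subgroup.center G))
  -- transport of closed non-neighbourhood counts
  have transport : ∀ y : VG,
      Nat.card {w : G // w ∉ Subgroup.center G ∧ Commute (y.1) w} = Nat.card (ncomm (φ y).1) := by
    intro y
    have e1 : {w : G // w ∉ Subgroup.center G ∧ Commute (y.1) w} ≃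
        {w : VG // ¬ (noncommutingGraph G).Adj y w} :=
      ⟨fun w => ⟨⟨w.1, w.2.1⟩, not_not_intro w.2.2⟩,
       fun w => ⟨w.1.1, w.1.2, not_not.mp w.2⟩,
       fun w => rfl, fun w => Subtype.ext (Subtype.ext rfl)⟩
    have e2 : {w : VG // ¬ (noncommutingGraph G).Adj y w} ≃
        {w : {x : Matrix.GeneralLinearGroup (Fin 2) F // x ∉ Subgroup.center _} //
          ¬ (noncommutingGraph _).Adj (φ y) w} :=
      Equiv.subtypeEquiv φ.toEquiv (fun w => not_congr φ.map_adj_iff.symm)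
    have e3 : {w : {x : Matrix.GeneralLinearGroup (Fin 2) F // x ∉ Subgroup.center _} //
          ¬ (noncommutingGraph _).Adj (φ y) w} ≃ ncomm (φ y).1 :=
      ⟨fun w => ⟨w.1.1, w.1.2, not_not.mp w.2⟩,
       fun A => ⟨⟨A.1, A.2.1⟩, not_not_intro A.2.2⟩,
       fun w => Subtype.ext (Subtype.ext rfl), fun A => rfl⟩
    exact Nat.card_congr ((e1.trans e2).trans e3)
  set z := Nat.card (Subgroup.center G) with hz
  have hzpos : 0 < z := Nat.card_pos
  set a := Fintype.card F - 1 with ha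
  have hq4 : 4 ≤ q := hq3
  have haq : a + 1 = q := by rw [ha, hF]; omega
  have ha3 : 3 ≤ a := by omega
  -- z divides a
  have hdvd_u : z ∣ a * a := by
    set yu : VG := φ.symm ⟨uGL, hu_nc⟩ with hyu
    have hcnt := centralizer_card_split (K := G) yu.1
    have := transport yu
    rw [RelIso.apply_symm_apply] at this
    rw [this, ncomm_card_u] at hcnt
    have hdvd : z ∣ Nat.card (Subgroup.centralizer {yu.1}) :=
      Subgroup.card_dvd_of_le (Subgroup.center_le_centralizer _)
    rw [hcnt] at hdvd
    exact (Nat.dvd_add_right dvd_rfl).mp hdvd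
  have hdvd_s : z ∣ a * a - a := by
    set ys : VG := φ.symm ⟨sGL t ht0, hs_nc⟩ with hys
    have hcnt := centralizer_card_split (K := G) ys.1
    have := transport ys
    rw [RelIso.apply_symm_apply] at this
    rw [this, ncomm_card_s t ht0 ht1] at hcnt
    have hdvd : z ∣ Nat.card (Subgroup.centralizer {ys.1}) :=
      Subgroup.card_dvd_of_le (Subgroup.center_le_centralizer _)
    rw [hcnt] at hdvd
    exact (Nat.dvd_add_right dvd_rfl).mp hdvd
  have hdvd_a : z ∣ a := by
    have h1 : a ≤ a * a := Nat.le_mul_of_pos_left a (by omega)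
    have := Nat.dvd_sub hdvd_u hdvd_s
    rwa [Nat.sub_sub_self h1] at this
  have hza : z ≤ a := Nat.le_of_dvd (by omega) hdvd_a
  -- the Z2 element
  obtain ⟨x, hxnc, hx2⟩ := exists_Z2_elt (K := G)
    (φ.symm ⟨uGL, hu_nc⟩).1 (φ.symm ⟨uGL, hu_nc⟩).2
  set xv : VG := ⟨x, hxnc⟩ with hxv
  set cx := Nat.card {w : G // w ∉ Subgroup.center G ∧ Commute x w} with hcx
  have hcx_le : cx ≤ q * q - q := by
    rw [hcx]
    have := transport xv
    rw [this]
    have := ncomm_card_le ((φ xv).1 : Matrix.GeneralLinearGroup (Fin 2) F) (φ xv).2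
    rwa [hF] at this
  have hCx : Nat.card (Subgroup.centralizer ({x} : Set G)) = z + cx :=
    centralizer_card_split (K := G) x
  have hLagrange : (z + cx) * (Subgroup.centralizer ({x} : Set G)).index = Nat.card G := by
    rw [← hCx]
    exact Subgroup.card_mul_index _
  have hidx : (Subgroup.centralizer ({x} : Set G)).index ≤ z :=
    index_le_of_comm_center x hx2
  -- cardinality of G
  set Nvert := Nat.card VG with hNvert
  have hGcard : Nat.card G = z + Nvert := by
    rw [card_split G (fun g => g ∈ Subgroup.center G)]
  -- cardinality of vertices via GL
  have hVcard : Nvert + a =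
      Nat.card (Matrix.GeneralLinearGroup (Fin 2) F) := by
    have h1 := card_split (Matrix.GeneralLinearGroup (Fin 2) F)
      (fun g => g ∈ Subgroup.center (Matrix.GeneralLinearGroup (Fin 2) F))
    have h2 : Nat.card (Subgroup.center (Matrix.GeneralLinearGroup (Fin 2) F)) = a := by
      rw [Nat.card_congr (centerEquiv (F := F)).symm, Nat.card_eq_fintype_card,
        Fintype.card_units, ha]
    have h3 : Nvert = Nat.card
        {x : Matrix.GeneralLinearGroup (Fin 2) F // x ∉ Subgroup.center _} :=
      Nat.card_congr φ.toEquiv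
    rw [h3, h1, h2]
    omega
  have hGL_card : Nat.card (Matrix.GeneralLinearGroup (Fin 2) F)
      = (q * q - 1) * (q * q - q) := by
    rw [Matrix.card_GL_field, Fin.prod_univ_two, hF]
    norm_num [pow_succ]
  -- final arithmetic
  have hNv : Nvert + a = (a * a + 2 * a) * (a * a + a) := by
    rw [hVcard, hGL_card]
    have e1 : q * q = a * a + 2 * a + 1 := by rw [← haq]; ring
    rw [e1]
    have e2 : a * a + 2 * a + 1 - 1 = a * a + 2 * a := by omega
    have e3 : a * a + 2 * a + 1 - q = a * a + a := by rw [← haq]; omega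
    rw [e2, e3]
  have hcx_le' : cx ≤ a * a + a := by
    have h1 : q ≤ q * q := Nat.le_mul_of_pos_left q (by omega)
    have e1 : q * q - q = a * a + a := by
      have : q * q = a * a + 2 * a + 1 := by rw [← haq]; ring
      omega
    omega
  have hGpos : 0 < Nat.card G := Nat.card_pos
  have hidxpos : 0 < (Subgroup.centralizer ({x} : Set G)).index := by
    rcases Nat.eq_zero_or_pos (Subgroup.centralizer ({x} : Set G)).index with h | h
    · rw [h, mul_zero] at hLagrange; omega
    · exact h
  -- contradiction
  have hbound : Nat.card G ≤ (a * a + 2 * a) * a := by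
    calc Nat.card G = (z + cx) * (Subgroup.centralizer ({x} : Set G)).index :=
      hLagrange.symm
    _ ≤ (a + (a * a + a)) * a :=
      Nat.mul_le_mul (Nat.add_le_add hza hcx_le') (hidx.trans hza)
    _ = (a * a + 2 * a) * a := by ring_nf
  have hbig : z + Nvert ≤ (a * a + 2 * a) * a := by rw [← hGcard]; exact hbound
  nlinarith [hNv, hbig, hzpos, ha3]
end

section
/- Let $q \geq 5$ be an odd prime power and let $G$ be a group whose non-commuting graph is isomorphic (as a graph) to the non-commuting graph of the special linear group $\mathrm{SL}(2,q)$. Then $G$ is not nilpotent. -/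
section Commutant

variable {F : Type*} [Field F]

lemma commutant_mem_span {F : Type*} [Field F]
    (X Y : Matrix (Fin 2) (Fin 2) F) (hX : ¬ ∃ a : F, X = a • 1)
    (h : X * Y = Y * X) : ∃ a b : F, Y = a • 1 + b • X := by
  have e00 := congrFun (congrFun h 0) 0
  have e01 := congrFun (congrFun h 0) 1
  have e10 := congrFun (congrFun h 1) 0
  have e11 := congrFun (congrFun h 1) 1
  simp only [Matrix.mul_apply, Fin.sum_univ_two] at e00 e01 e10 e11
  by_cases hq : X 0 1 ≠ 0
  · refine ⟨Y 0 0 - (Y 0 1 / X 0 1) * X 0 0, Y 0 1 / X 0 1, ?_⟩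
    ext i j
    fin_cases i <;> fin_cases j <;>
      simp only [Matrix.add_apply, Matrix.smul_apply, Matrix.one_apply, smul_eq_mul] <;>
      simp <;> field_simp <;>
      first
        | linear_combination e00
        | linear_combination -e00
        | linear_combination e01
        | linear_combination 2*e01
        | linear_combination e10
        | linear_combination 2*e10
  · by_cases hr : X 1 0 ≠ 0
    · refine ⟨Y 0 0 - (Y 1 0 / X 1 0) * X 0 0, Y 1 0 / X 1 0, ?_⟩
      ext i j
      fin_cases i <;> fin_cases j <;>
        simp only [Matrix.add_apply, Matrix.smul_apply, Matrix.one_apply, smul_eq_mul] <;>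
        simp <;> field_simp <;>
        first
          | linear_combination e00
          | linear_combination -e00
          | linear_combination -2*e00
          | linear_combination e01
          | linear_combination 2*e01
          | linear_combination e10
          | linear_combination -e10
          | linear_combination 2*e10
    · push_neg at hq hr
      have hd : X 0 0 ≠ X 1 1 := by
        intro hcontra
        exact hX ⟨X 0 0, by
          ext i j
          fin_cases i <;> fin_cases j <;>
            simp [Matrix.one_apply, hq, hr, hcontra.symm]⟩
      have hsub : X 0 0 - X 1 1 ≠ 0 := sub_ne_zero.mpr hd
      simp only [hq, hr, mul_zero, zero_mul, add_zero, zero_add] at e01 e10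
      have h01 : Y 0 1 = 0 := by
        have h2 : Y 0 1 * (X 0 0 - X 1 1) = 0 := by linear_combination e01
        rcases mul_eq_zero.mp h2 with h3 | h3
        · exact h3
        · exact absurd h3 hsub
      have h10 : Y 1 0 = 0 := by
        have h2 : Y 1 0 * (X 1 1 - X 0 0) = 0 := by linear_combination e10
        rcases mul_eq_zero.mp h2 with h3 | h3
        · exact h3
        · exact absurd (by linear_combination -h3 : X 0 0 - X 1 1 = 0) hsub
      refine ⟨Y 0 0 - ((Y 0 0 - Y 1 1)/(X 0 0 - X 1 1)) * X 0 0,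
        (Y 0 0 - Y 1 1)/(X 0 0 - X 1 1), ?_⟩
      ext i j
      fin_cases i <;> fin_cases j <;>
        simp only [Matrix.add_apply, Matrix.smul_apply, Matrix.one_apply, smul_eq_mul] <;>
        simp [hq, hr, h01, h10] <;> field_simp <;> ring

abbrev SL2 (F : Type*) [CommRing F] := Matrix.SpecialLinearGroup (Fin 2) F

lemma commute_val {x y : SL2 F} (h : Commute x y) :
    x.val * y.val = y.val * x.val := by
  have := congrArg Subtype.val h
  simpa using this

def uu : SL2 F := ⟨!![1,1;0,1], by simp [Matrix.det_fin_two_of]⟩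

lemma uu_nonscalar : ¬ ∃ a : F, (uu : SL2 F).val = a • 1 := by
  rintro ⟨a, ha⟩
  have h := congrFun (congrFun ha 0) 1
  simp [uu, Matrix.one_apply] at h

def dd (lam : F) (h0 : lam ≠ 0) : SL2 F :=
  ⟨!![lam,0;0,lam⁻¹], by simp [Matrix.det_fin_two_of, h0]⟩

lemma dd_nonscalar (lam : F) (h0 : lam ≠ 0) (h1 : lam * lam ≠ 1) :
    ¬ ∃ a : F, (dd lam h0).val = a • 1 := by
  rintro ⟨a, ha⟩
  have h00 := congrFun (congrFun ha 0) 0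
  have h11 := congrFun (congrFun ha 1) 1
  simp [dd, Matrix.one_apply] at h00 h11
  apply h1
  have heq : lam * lam = lam * lam⁻¹ := by rw [h11, ← h00]
  rw [heq, mul_inv_cancel₀ h0]

lemma central_of_scalar (x : SL2 F) (a : F) (ha : x.val = a • 1) :
    x ∈ Subgroup.center (SL2 F) := by
  rw [Subgroup.mem_center_iff]
  intro g
  apply Subtype.ext
  rw [Matrix.SpecialLinearGroup.coe_mul, Matrix.SpecialLinearGroup.coe_mul, ha]
  simp

lemma nonscalar_of_not_central (x : SL2 F) (hx : x ∉ Subgroup.center (SL2 F)) :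
    ¬ ∃ a : F, x.val = a • 1 :=
  fun ⟨a, ha⟩ => hx (central_of_scalar x a ha)

lemma commute_span {x y : SL2 F} (hx : ¬∃ a : F, x.val = a • 1) (h : Commute x y) :
    ∃ a b : F, y.val = a • 1 + b • x.val :=
  commutant_mem_span _ _ hx (commute_val h)

end Commutant

section SL2Count

variable {F : Type*} [Field F]

lemma central_form (lam : F) (h0 : lam ≠ 0) (h1 : lam * lam ≠ 1) (z : SL2 F)
    (hz : z ∈ Subgroup.center (SL2 F)) :
    z.val = (1:F) • 1 ∨ z.val = (-1 : F) • 1 := by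
  have hcu : Commute (uu : SL2 F) z := Subgroup.mem_center_iff.mp hz uu
  have hcd : Commute (dd lam h0) z := Subgroup.mem_center_iff.mp hz (dd lam h0)
  obtain ⟨a, b, hab⟩ := commute_span uu_nonscalar hcu
  obtain ⟨a', b', hab'⟩ := commute_span (dd_nonscalar lam h0 h1) hcd
  have h01 := congrFun (congrFun hab 0) 1
  have h01' := congrFun (congrFun hab' 0) 1
  simp [uu, dd, Matrix.one_apply] at h01 h01'
  -- h01 : z.val 0 1 = b, h01' : z.val 0 1 = 0
  have hb : b = 0 := by rw [h01'] at h01; exact h01.symm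
  have hz2 : z.val = a • 1 := by rw [hab, hb]; simp
  have hdet : a * a = 1 := by
    have h2 := z.2
    rw [hz2] at h2
    simp [Matrix.det_smul, pow_two] at h2
    linear_combination h2
  rcases mul_self_eq_one_iff.mp hdet with h | h
  · left; rw [hz2, h]
  · right; rw [hz2, h]

def negOne : SL2 F := ⟨(-1 : F) • 1, by simp [Matrix.det_neg]⟩

lemma card_center (hm : (-1:F) ≠ 1) (lam : F) (h0 : lam ≠ 0) (h1 : lam * lam ≠ 1) :
    Nat.card (Subgroup.center (SL2 F)) = 2 := by
  rw [Nat.card_eq_two_iff]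
  refine ⟨⟨1, Subgroup.one_mem _⟩, ⟨negOne, central_of_scalar negOne (-1) rfl⟩, ?_, ?_⟩
  · intro hcontra
    have h2 := congrArg
      (fun w : ↥(Subgroup.center (SL2 F)) => ((w : SL2 F).val 0 0)) hcontra
    simp [negOne, Matrix.one_apply] at h2
    exact hm h2.symm
  · rw [Set.eq_univ_iff_forall]
    intro z
    simp only [Set.mem_insert_iff, Set.mem_singleton_iff]
    rcases central_form lam h0 h1 z.1 z.2 with h | h
    · left; apply Subtype.ext; apply Subtype.ext; rw [h]; simp
    · right; apply Subtype.ext; apply Subtype.ext; rw [h]; rfl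

lemma uu_not_central (lam : F) (h0 : lam ≠ 0) (h1 : lam * lam ≠ 1) :
    (uu : SL2 F) ∉ Subgroup.center (SL2 F) := by
  intro hz
  rcases central_form lam h0 h1 uu hz with h | h <;>
  · have h2 := congrFun (congrFun h 0) 1
    simp [uu, Matrix.one_apply] at h2

lemma dd_not_central (lam : F) (h0 : lam ≠ 0) (h1 : lam * lam ≠ 1) :
    (dd lam h0 : SL2 F) ∉ Subgroup.center (SL2 F) := by
  intro hz
  apply dd_nonscalar lam h0 h1
  rcases central_form lam h0 h1 _ hz with h | h
  exacts [⟨1, h⟩, ⟨-1, h⟩]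

variable [Fintype F]

lemma card_commute_dd (lam : F) (h0 : lam ≠ 0) (h1 : lam * lam ≠ 1) :
    Nat.card {y : SL2 F // Commute (dd lam h0) y} = Fintype.card F - 1 := by
  classical
  have hbij : Function.Bijective (fun mu : Fˣ =>
      (⟨⟨!![(mu:F),0;0,((mu⁻¹:Fˣ):F)], by
          simp [Matrix.det_fin_two_of]⟩, by
        apply Subtype.ext
        show (dd lam h0).val * _ = _ * (dd lam h0).val
        ext i j
        fin_cases i <;> fin_cases j <;>
          simp [dd, Matrix.mul_apply, Fin.sum_univ_two, mul_comm]⟩ :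
      {y : SL2 F // Commute (dd lam h0) y})) := by
    constructor
    · intro m1 m2 hq
      have h2 := congrArg (fun w : {y : SL2 F // Commute (dd lam h0) y} =>
        (w : SL2 F).val 0 0) hq
      simp at h2
      exact Units.ext h2
    · rintro ⟨y, hy⟩
      obtain ⟨a, b, hab⟩ := commute_span (dd_nonscalar lam h0 h1) hy
      have h00 := congrFun (congrFun hab 0) 0
      have h01 := congrFun (congrFun hab 0) 1
      have h10 := congrFun (congrFun hab 1) 0
      have h11 := congrFun (congrFun hab 1) 1
      simp [dd, Matrix.one_apply] at h00 h01 h10 h11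
      have hdet := y.2
      rw [Matrix.det_fin_two, h01, h10] at hdet
      simp at hdet
      have hy00 : y.val 0 0 ≠ 0 := by
        intro hc; rw [hc] at hdet; simp at hdet
      refine ⟨Units.mk0 (y.val 0 0) hy00, ?_⟩
      apply Subtype.ext
      apply Subtype.ext
      show !![_,_;_,_] = y.val
      have hy11 : (y.val 0 0)⁻¹ = y.val 1 1 := by
        field_simp
        linear_combination -hdet
      ext i j
      fin_cases i <;> fin_cases j <;> simp [h01, h10, hy11]
  rw [Nat.card_eq_of_bijective _ hbij |>.symm, Nat.card_units, Nat.card_eq_fintype_card]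

lemma card_sq_one (hm : (-1:F) ≠ 1) : Nat.card {e : F // e * e = 1} = 2 := by
  rw [Nat.card_eq_two_iff]
  refine ⟨⟨1, one_mul 1⟩, ⟨-1, by simp⟩, ?_, ?_⟩
  · intro hc
    have h2 := congrArg (fun w : {e : F // e * e = 1} => (w : F)) hc
    simp at h2
    exact hm h2.symm
  · rw [Set.eq_univ_iff_forall]
    intro e
    simp only [Set.mem_insert_iff, Set.mem_singleton_iff]
    rcases mul_self_eq_one_iff.mp e.2 with h | h
    · left; exact Subtype.ext h
    · right; exact Subtype.ext h

lemma card_commute_uu (hm : (-1:F) ≠ 1) :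
    Nat.card {y : SL2 F // Commute (uu : SL2 F) y} = 2 * Fintype.card F := by
  classical
  have hbij : Function.Bijective (fun p : {e : F // e * e = 1} × F =>
      (⟨⟨!![(p.1:F), p.2; 0, (p.1:F)], by
          simp [Matrix.det_fin_two_of, p.1.2]⟩, by
        apply Subtype.ext
        show (uu).val * _ = _ * (uu).val
        ext i j
        fin_cases i <;> fin_cases j <;>
          simp [uu, Matrix.mul_apply, Fin.sum_univ_two, mul_comm, add_comm]⟩ :
      {y : SL2 F // Commute (uu : SL2 F) y})) := by
    constructor
    · intro m1 m2 hq
      have h2 := congrArg (fun w : {y : SL2 F // Commute (uu : SL2 F) y} =>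
        (w : SL2 F).val 0 0) hq
      have h3 := congrArg (fun w : {y : SL2 F // Commute (uu : SL2 F) y} =>
        (w : SL2 F).val 0 1) hq
      simp at h2 h3
      exact Prod.ext (Subtype.ext h2) h3
    · rintro ⟨y, hy⟩
      obtain ⟨a, b, hab⟩ := commute_span uu_nonscalar hy
      have h00 := congrFun (congrFun hab 0) 0
      have h01 := congrFun (congrFun hab 0) 1
      have h10 := congrFun (congrFun hab 1) 0
      have h11 := congrFun (congrFun hab 1) 1
      simp [uu, Matrix.one_apply] at h00 h01 h10 h11
      have hdet := y.2
      rw [Matrix.det_fin_two, h10] at hdet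
      simp at hdet
      have h0011 : y.val 1 1 = y.val 0 0 := by rw [h00, h11]
      have he : y.val 0 0 * y.val 0 0 = 1 := by
        nth_rewrite 2 [← h0011]
        exact hdet
      refine ⟨(⟨y.val 0 0, he⟩, y.val 0 1), ?_⟩
      apply Subtype.ext
      apply Subtype.ext
      show !![_,_;_,_] = y.val
      ext i j
      fin_cases i <;> fin_cases j <;> simp [h10, h0011]
  rw [Nat.card_eq_of_bijective _ hbij |>.symm, Nat.card_prod, card_sq_one hm,
    Nat.card_eq_fintype_card]

lemma card_commute_le (x : SL2 F) (hx : ¬ ∃ a : F, x.val = a • 1) :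
    Nat.card {y : SL2 F // Commute x y} ≤ 2 * Fintype.card F := by
  classical
  set X := x.val with hXdef
  set P : F × F → Prop := fun p => Matrix.det (p.1 • 1 + p.2 • X) = 1 with hP
  have hstep1 : Nat.card {y : SL2 F // Commute x y} ≤ Nat.card {p : F × F // P p} := by
    have hex : ∀ y : {y : SL2 F // Commute x y}, ∃ p : F × F,
        (y : SL2 F).val = p.1 • 1 + p.2 • X := by
      intro y
      obtain ⟨a, b, hab⟩ := commute_span hx y.2
      exact ⟨(a, b), hab⟩
    have hinj : Function.Injective (fun y : {y : SL2 F // Commute x y} =>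
        (⟨Classical.choose (hex y), by
          rw [hP]
          dsimp only
          rw [← Classical.choose_spec (hex y)]
          exact (y : SL2 F).2⟩ : {p : F × F // P p})) := by
      intro y1 y2 hq
      have h2 : Classical.choose (hex y1) = Classical.choose (hex y2) :=
        congrArg Subtype.val hq
      apply Subtype.ext
      apply Subtype.ext
      rw [Classical.choose_spec (hex y1), Classical.choose_spec (hex y2), h2]
    exact Nat.card_le_card_of_injective _ hinj
  refine hstep1.trans ?_
  -- now bound the number of (a,b) pairs
  have hPiff : ∀ a b : F, P (a, b) ↔
      (a + b * X 0 0) * (a + b * X 1 1) - b * X 0 1 * (b * X 1 0) = 1 := by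
    intro a b
    rw [hP]
    dsimp only
    rw [Matrix.det_fin_two]
    simp [Matrix.one_apply]
  have hcard : Nat.card {p : F × F // P p} =
      (Finset.univ.filter P).card := by
    rw [Nat.card_eq_fintype_card, Fintype.card_subtype]
  rw [hcard]
  have hbound := Finset.card_le_mul_card_image_of_maps_to
    (f := Prod.snd) (s := Finset.univ.filter P) (t := Finset.univ)
    (fun a _ => Finset.mem_univ _) 2 ?_
  · calc (Finset.univ.filter P).card ≤ 2 * Finset.univ.card := hbound
      _ = 2 * Fintype.card F := by rw [Finset.card_univ]
  · intro b _
    by_cases hne : (Finset.filter (fun p => Prod.snd p = b) (Finset.univ.filter P)).Nonempty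
    · obtain ⟨⟨a0, b0⟩, hmem⟩ := hne
      simp only [Finset.mem_filter, Finset.mem_univ, true_and] at hmem
      obtain ⟨hp0, hb0⟩ := hmem
      rw [hb0, hPiff] at hp0
      have hsub : (Finset.filter (fun p => Prod.snd p = b) (Finset.univ.filter P)) ⊆
          {(a0, b), (-a0 - b * (X 0 0 + X 1 1), b)} := by
        rintro ⟨a1, b1⟩ hm1
        simp only [Finset.mem_filter, Finset.mem_univ, true_and] at hm1
        obtain ⟨hp1, hb1⟩ := hm1
        rw [hb1, hPiff] at hp1
        have hfac : (a1 - a0) * (a1 + a0 + b * (X 0 0 + X 1 1)) = 0 := by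
          linear_combination hp1 - hp0
        simp only [Finset.mem_insert, Finset.mem_singleton, Prod.mk.injEq]
        rcases mul_eq_zero.mp hfac with h | h
        · left; exact ⟨by linear_combination h, hb1⟩
        · right; exact ⟨by linear_combination h, hb1⟩
      calc (Finset.filter (fun p => Prod.snd p = b) (Finset.univ.filter P)).card
          ≤ ({(a0, b), (-a0 - b * (X 0 0 + X 1 1), b)} : Finset (F × F)).card :=
            Finset.card_le_card hsub
        _ ≤ 2 := by
            refine (Finset.card_insert_le _ _).trans ?_
            simp
    · rw [Finset.not_nonempty_iff_eq_empty] at hne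
      rw [hne]
      simp

lemma card_noncentral_ge :
    (Fintype.card F - 1) * Fintype.card F * Fintype.card F ≤
      Nat.card {x : SL2 F // x ∉ Subgroup.center (SL2 F)} := by
  classical
  have hinj : Function.Injective (fun t : Fˣ × F × F =>
      (⟨⟨!![t.2.1, (t.2.1 * t.2.2 - 1) / (t.1 : F); (t.1 : F), t.2.2], by
          rw [Matrix.det_fin_two_of]
          field_simp
          ring⟩, by
        intro hc
        obtain ⟨a, b, hab⟩ := commute_span uu_nonscalar
          (Subgroup.mem_center_iff.mp hc uu)
        have h10 := congrFun (congrFun hab 1) 0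
        simp [uu, Matrix.one_apply] at h10⟩ : {x : SL2 F // x ∉ Subgroup.center (SL2 F)})) := by
    intro t1 t2 hq
    have e10 := congrArg (fun w : {x : SL2 F // x ∉ Subgroup.center (SL2 F)} =>
      (w : SL2 F).val 1 0) hq
    have e00 := congrArg (fun w : {x : SL2 F // x ∉ Subgroup.center (SL2 F)} =>
      (w : SL2 F).val 0 0) hq
    have e11 := congrArg (fun w : {x : SL2 F // x ∉ Subgroup.center (SL2 F)} =>
      (w : SL2 F).val 1 1) hq
    simp at e10 e00 e11
    exact Prod.ext (Units.ext e10) (Prod.ext e00 e11)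
  have := Nat.card_le_card_of_injective _ hinj
  calc (Fintype.card F - 1) * Fintype.card F * Fintype.card F
      = Nat.card (Fˣ × F × F) := by
        rw [Nat.card_prod, Nat.card_prod, Nat.card_units, Nat.card_eq_fintype_card]
        ring
    _ ≤ _ := this

end SL2Count

section GraphSide

variable {H : Type*} [Group H]

noncomputable def nbcount (v : {x : H // x ∉ Subgroup.center H}) : ℕ :=
  Nat.card {w : {x : H // x ∉ Subgroup.center H} // ¬ (noncommutingGraph H).Adj v w}

lemma card_commute_eq_center_add_nbcount [Finite H]
    (v : {x : H // x ∉ Subgroup.center H}) :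
    Nat.card {y : H // Commute (v : H) y} =
      Nat.card (Subgroup.center H) + nbcount v := by
  classical
  have e := Equiv.sumCompl
    (fun y : {y : H // Commute (v : H) y} => (y : H) ∈ Subgroup.center H)
  rw [← Nat.card_congr e, Nat.card_sum]
  congr 1
  · refine Nat.card_congr ⟨fun z => ⟨z.1.1, z.2⟩,
      fun z => ⟨⟨z.1, Subgroup.mem_center_iff.mp z.2 (v : H)⟩, z.2⟩,
      fun z => rfl, fun z => rfl⟩
  · refine Nat.card_congr ⟨fun z => ⟨⟨z.1.1, z.2⟩, not_not_intro z.1.2⟩,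
      fun w => ⟨⟨w.1.1, not_not.mp w.2⟩, w.1.2⟩,
      fun z => rfl, fun w => rfl⟩

lemma nbcount_iso {K : Type*} [Group K]
    (ψ : noncommutingGraph H ≃g noncommutingGraph K)
    (v : {x : H // x ∉ Subgroup.center H}) :
    nbcount (ψ v) = nbcount v :=
  (Nat.card_congr (Equiv.subtypeEquiv ψ.toEquiv
    (fun a => not_congr (ψ.map_adj_iff).symm))).symm

lemma exists_upper2 (hnil : Group.IsNilpotent H)
    (t0 : H) (ht0 : t0 ∉ Subgroup.center H) :
    ∃ t : H, t ∈ upperCentralSeries H 2 ∧ t ∉ Subgroup.center H := by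
  by_contra hc
  push_neg at hc
  have h21 : upperCentralSeries H 2 ≤ upperCentralSeries H 1 := by
    intro x hx
    show x ∈ Subgroup.upperCentralSeries H 1
    rw [upperCentralSeries_one]
    exact hc x hx
  have hstep : ∀ n, upperCentralSeries H (n + 1) ≤ upperCentralSeries H 1 := by
    intro n
    induction n with
    | zero => exact le_refl _
    | succ k ih =>
      intro x hx
      apply h21
      show x ∈ Subgroup.upperCentralSeries H (1 + 1)
      rw [mem_upperCentralSeries_succ_iff]
      intro y
      exact ih (mem_upperCentralSeries_succ_iff.mp hx y)
  haveI := hnil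
  obtain ⟨n, hn⟩ := Group.IsNilpotent.nilpotent H
  apply ht0
  cases n with
  | zero =>
    rw [upperCentralSeries_zero] at hn
    have h1 : t0 ∈ (⊥ : Subgroup H) := by rw [hn]; trivial
    rw [Subgroup.mem_bot] at h1
    rw [h1]
    exact Subgroup.one_mem _
  | succ k =>
    have h1 : t0 ∈ Subgroup.upperCentralSeries H (k + 1) := by rw [hn]; trivial
    have h2 : t0 ∈ Subgroup.upperCentralSeries H 1 := hstep k h1
    rwa [upperCentralSeries_one] at h2

def commMap (t : H) (ht : t ∈ upperCentralSeries H 2) :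
    H →* Subgroup.center H where
  toFun g := ⟨t * g * t⁻¹ * g⁻¹, by
    have h := mem_upperCentralSeries_succ_iff.mp
      (show t ∈ upperCentralSeries H (1 + 1) from ht) g
    rwa [upperCentralSeries_one] at h⟩
  map_one' := by
    apply Subtype.ext
    simp
  map_mul' g h := by
    apply Subtype.ext
    show t * (g * h) * t⁻¹ * (g * h)⁻¹ = (t * g * t⁻¹ * g⁻¹) * (t * h * t⁻¹ * h⁻¹)
    have hcen : t * h * t⁻¹ * h⁻¹ ∈ Subgroup.center H := by
      have h2 := mem_upperCentralSeries_succ_iff.mp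
        (show t ∈ upperCentralSeries H (1 + 1) from ht) h
      rwa [upperCentralSeries_one] at h2
    have hcomm := Subgroup.mem_center_iff.mp hcen g⁻¹
    calc t * (g * h) * t⁻¹ * (g * h)⁻¹
        = t * g * t⁻¹ * ((t * h * t⁻¹ * h⁻¹) * g⁻¹) := by group
      _ = t * g * t⁻¹ * (g⁻¹ * (t * h * t⁻¹ * h⁻¹)) := by rw [hcomm]
      _ = (t * g * t⁻¹ * g⁻¹) * (t * h * t⁻¹ * h⁻¹) := by group

lemma card_ker_commMap (t : H) (ht : t ∈ upperCentralSeries H 2) :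
    Nat.card (commMap t ht).ker = Nat.card {y : H // Commute t y} :=
  Nat.card_congr (Equiv.subtypeEquivRight (fun x => by
    rw [MonoidHom.mem_ker, Subtype.ext_iff]
    show t * x * t⁻¹ * x⁻¹ = 1 ↔ Commute t x
    constructor
    · intro h
      exact mul_inv_eq_iff_eq_mul.mp (mul_inv_eq_one.mp h)
    · intro h
      rw [show t * x = x * t from h]
      group))

end GraphSide

theorem not_nilpotent_of_noncommuting_graph_iso_sl
    (q : ℕ) (hq : IsPrimePow q) (hq5 : 5 ≤ q) (hqo : Odd q)
    (F : Type*) [Field F] [Fintype F] (hF : Fintype.card F = q)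
    (G : Type*) [Group G]
    (φ : noncommutingGraph G ≃g
      noncommutingGraph (Matrix.SpecialLinearGroup (Fin 2) F)) :
    ¬ Group.IsNilpotent G := by
  intro hnil
  classical
  -- characteristic is odd
  have hm1 : (-1 : F) ≠ 1 := by
    intro hcontra
    have h2 : ((2 : ℕ) : F) = 0 := by push_cast; linear_combination -hcontra
    have hdvd : ringChar F ∣ 2 := ringChar.dvd h2
    have hp : (ringChar F).Prime := CharP.char_is_prime F (ringChar F)
    have hch2 : ringChar F = 2 := by
      have := Nat.le_of_dvd (by norm_num) hdvd
      have := hp.two_le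
      omega
    haveI := ringChar.charP F
    obtain ⟨n, hpp, hcard⟩ := FiniteField.card F (ringChar F)
    rw [hF, hch2] at hcard
    have heven : Even q := by
      rw [hcard]
      exact Nat.even_pow.mpr ⟨even_two, n.pos.ne'⟩
    exact (Nat.not_even_iff_odd.mpr hqo) heven
  -- a lambda with lam^2 ≠ 1
  obtain ⟨lam, hlam0, hlam1⟩ : ∃ lam : F, lam ≠ 0 ∧ lam * lam ≠ 1 := by
    have hsub : ¬ (Finset.univ : Finset F) ⊆ {0, 1, -1} := by
      intro hsub
      have h3 := Finset.card_le_card hsub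
      have h4 : Finset.card ({0, 1, -1} : Finset F) ≤ 3 := by
        refine le_trans (Finset.card_insert_le _ _) ?_
        have := Finset.card_insert_le (1 : F) ({-1} : Finset F)
        simp only [Finset.card_singleton] at this ⊢
        omega
      rw [Finset.card_univ, hF] at h3
      omega
    obtain ⟨lam, -, hnot⟩ := Finset.not_subset.mp hsub
    simp only [Finset.mem_insert, Finset.mem_singleton] at hnot
    push_neg at hnot
    obtain ⟨hl0, hl1, hl2⟩ := hnot
    refine ⟨lam, hl0, fun hsq => ?_⟩
    rcases mul_self_eq_one_iff.mp hsq with h | h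
    exacts [hl1 h, hl2 h]
  -- vertices on the SL2 side
  set vu : {x : SL2 F // x ∉ Subgroup.center (SL2 F)} :=
    ⟨uu, uu_not_central lam hlam0 hlam1⟩ with hvu
  set vd : {x : SL2 F // x ∉ Subgroup.center (SL2 F)} :=
    ⟨dd lam hlam0, dd_not_central lam hlam0 hlam1⟩ with hvd
  -- G is finite
  have hfinV : Finite {x : G // x ∉ Subgroup.center G} :=
    Finite.of_equiv _ φ.toEquiv.symm
  set t0v := φ.symm vu with ht0v
  have ht0 : (t0v : G) ∉ Subgroup.center G := t0v.2
  have hfinZ : Finite (Subgroup.center G) := by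
    refine Finite.of_injective (fun z : Subgroup.center G =>
      (⟨(t0v : G) * z, ?_⟩ : {x : G // x ∉ Subgroup.center G})) ?_
    · intro hcmem
      apply ht0
      have h5 := Subgroup.mul_mem _ hcmem (Subgroup.inv_mem _ z.2)
      simpa using h5
    · intro z1 z2 hq12
      have h6 := congrArg Subtype.val hq12
      simp only at h6
      exact Subtype.ext (mul_left_cancel h6)
  have hfinG : Finite G :=
    Finite.of_equiv _ (Equiv.sumCompl (fun x : G => x ∈ Subgroup.center G))
  set m := Nat.card (Subgroup.center G) with hmdef
  -- counts on the SL2 side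
  have hcZ : Nat.card (Subgroup.center (SL2 F)) = 2 :=
    card_center hm1 lam hlam0 hlam1
  have hnbd : nbcount vd = q - 3 := by
    have h2 := card_commute_eq_center_add_nbcount vd
    rw [card_commute_dd lam hlam0 hlam1, hcZ, hF] at h2
    omega
  have hnbu : nbcount vu = 2 * q - 2 := by
    have h2 := card_commute_eq_center_add_nbcount vu
    rw [card_commute_uu hm1, hcZ, hF] at h2
    omega
  -- m divides m + nbcount v for all vertices v of G
  have hdvd : ∀ v : {x : G // x ∉ Subgroup.center G}, m ∣ m + nbcount v := by
    intro v
    have h2 := card_commute_eq_center_add_nbcount v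
    have h3 : Nat.card (Subgroup.center G) ∣
        Nat.card (Subgroup.centralizer {(v : G)}) :=
      Subgroup.card_dvd_of_le (Subgroup.center_le_centralizer _)
    have h4 : Nat.card (Subgroup.centralizer {(v : G)}) =
        Nat.card {y : G // Commute (v : G) y} :=
      Nat.card_congr (Equiv.subtypeEquivRight (fun y => by
        rw [Subgroup.mem_centralizer_singleton_iff]
        exact ⟨fun h => h.symm, fun h => h.symm⟩))
    rw [← h2, ← h4]
    exact h3
  have hd1 : m ∣ q - 3 := by
    have h := hdvd (φ.symm vd)
    have heq : nbcount (φ.symm vd) = q - 3 := by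
      rw [← hnbd, ← nbcount_iso φ (φ.symm vd), RelIso.apply_symm_apply]
    rw [heq] at h
    exact (Nat.dvd_add_right (dvd_refl m)).mp h
  have hd2 : m ∣ 2 * q - 2 := by
    have h := hdvd (φ.symm vu)
    have heq : nbcount (φ.symm vu) = 2 * q - 2 := by
      rw [← hnbu, ← nbcount_iso φ (φ.symm vu), RelIso.apply_symm_apply]
    rw [heq] at h
    exact (Nat.dvd_add_right (dvd_refl m)).mp h
  have hm4 : m ∣ 4 := by
    have h24 : (2 * q - 2) - 2 * (q - 3) = 4 := by omega
    have h5 : m ∣ 2 * (q - 3) := Dvd.dvd.mul_left hd1 2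
    have h6 := Nat.dvd_sub hd2 h5
    rwa [h24] at h6
  have hmle : m ≤ 4 := Nat.le_of_dvd (by norm_num) hm4
  -- the element of the second center
  obtain ⟨t, ht2, htnc⟩ := exists_upper2 hnil (t0v : G) ht0
  set vt : {x : G // x ∉ Subgroup.center G} := ⟨t, htnc⟩ with hvt
  have hnt : nbcount vt ≤ 2 * q - 2 := by
    have h2 := card_commute_eq_center_add_nbcount (φ vt)
    have h3 := card_commute_le ((φ vt) : SL2 F)
      (nonscalar_of_not_central _ (φ vt).2)
    rw [h2, hcZ, hF, nbcount_iso φ vt] at h3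
    omega
  have hker := card_ker_commMap t ht2
  have hcomm_t : Nat.card {y : G // Commute t y} = m + nbcount vt :=
    card_commute_eq_center_add_nbcount vt
  have hindex : ((commMap t ht2).ker).index ≤ m := by
    rw [Subgroup.index_ker]
    exact Nat.card_le_card_of_injective _ Subtype.val_injective
  have hGcard : Nat.card G =
      Nat.card ((commMap t ht2).ker) * ((commMap t ht2).ker).index :=
    (Subgroup.card_mul_index _).symm
  have hGle : Nat.card G ≤ (4 + (2 * q - 2)) * 4 := by
    rw [hGcard, hker, hcomm_t]
    exact Nat.mul_le_mul (Nat.add_le_add hmle hnt) (le_trans hindex hmle)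
  have hNcard : Nat.card {x : G // x ∉ Subgroup.center G} =
      Nat.card {x : SL2 F // x ∉ Subgroup.center (SL2 F)} :=
    Nat.card_congr φ.toEquiv
  have hlower := card_noncentral_ge (F := F)
  rw [hF] at hlower
  have hGge : (q - 1) * q * q ≤ Nat.card G := by
    calc (q - 1) * q * q
        ≤ Nat.card {x : SL2 F // x ∉ Subgroup.center (SL2 F)} := hlower
      _ = Nat.card {x : G // x ∉ Subgroup.center G} := hNcard.symm
      _ ≤ Nat.card G := Nat.card_le_card_of_injective _ Subtype.val_injective
  obtain ⟨r, rfl⟩ : ∃ r, q = r + 5 := ⟨q - 5, by omega⟩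
  have e1 : 4 + (2 * (r + 5) - 2) = 2 * r + 12 := by omega
  have e2 : (r + 5) - 1 = r + 4 := by omega
  rw [e1] at hGle
  rw [e2] at hGge
  have hcon : (r + 4) * (r + 5) * (r + 5) ≤ (2 * r + 12) * 4 := le_trans hGge hGle
  have hexp : (r + 4) * (r + 5) * (r + 5) = r*r*r + 14*(r*r) + 65*r + 100 := by ring
  rw [hexp] at hcon
  linarith [hcon, Nat.zero_le (r*r*r), Nat.zero_le (r*r)]
end

section
/- Let $q \geq 5$ be an odd prime power and let $G$ be a group whose non-commuting graph is isomorphic (as a graph) to the non-commuting graph of the special linear group $\mathrm{SL}(2,q)$. Then $G$ is not solvable. -/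
section MatrixLemmas

variable {F : Type*} [Field F]

/-- A matrix commuting with a non-scalar 2×2 matrix is a linear combination of `1` and it. -/
lemma mat_comm_struct (A B : Matrix (Fin 2) (Fin 2) F)
    (hA : ¬(A 0 1 = 0 ∧ A 1 0 = 0 ∧ A 0 0 = A 1 1))
    (h : A * B = B * A) :
    ∃ α β : F, B = α • (1 : Matrix (Fin 2) (Fin 2) F) + β • A := by
  have key : ∀ i j, (A * B) i j = (B * A) i j := fun i j => by rw [h]
  have E00 := key 0 0
  have E01 := key 0 1
  have E10 := key 1 0
  have E11 := key 1 1
  simp only [Matrix.mul_apply, Fin.sum_univ_two] at E00 E01 E10 E11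
  set a := A 0 0 with ha'
  set b := A 0 1 with hb'
  set c := A 1 0 with hc'
  set d := A 1 1 with hd'
  set e := B 0 0 with he'
  set f := B 0 1 with hf'
  set g := B 1 0 with hg'
  set hh := B 1 1 with hhh'
  by_cases hb : b ≠ 0
  · refine ⟨e - (f / b) * a, f / b, ?_⟩
    ext i j
    fin_cases i <;> fin_cases j <;>
      simp only [Matrix.add_apply, Matrix.smul_apply, Matrix.one_apply_eq, Matrix.one_apply_ne,
        Matrix.one_apply, Fin.zero_eta, Fin.mk_one, ne_eq, smul_eq_mul, if_true, if_false,
        zero_ne_one, one_ne_zero, reduceCtorEq, ite_true, ite_false, Fin.isValue]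
    · ring
    · field_simp
      rw [← hf', ← hb']; ring
    · field_simp
      linear_combination E00
    · field_simp
      linear_combination E01
  · push_neg at hb
    by_cases hc : c ≠ 0
    · refine ⟨e - (g / c) * a, g / c, ?_⟩
      ext i j
      fin_cases i <;> fin_cases j <;>
        simp only [Matrix.add_apply, Matrix.smul_apply, Matrix.one_apply_eq, Matrix.one_apply_ne,
          Matrix.one_apply, Fin.zero_eta, Fin.mk_one, ne_eq, smul_eq_mul, if_true, if_false,
          zero_ne_one, one_ne_zero, reduceCtorEq, ite_true, ite_false, Fin.isValue]
      · ring
      · field_simp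
        linear_combination E11
      · field_simp
        rw [← hg', ← hc']; ring
      · field_simp
        linear_combination -E10
    · push_neg at hc
      have had : a ≠ d := by tauto
      have had' : a - d ≠ 0 := sub_ne_zero.mpr had
      rw [hb] at E01
      rw [hc] at E10
      have hf : f = 0 := by
        have hfd : f * (a - d) = 0 := by linear_combination E01
        rcases mul_eq_zero.mp hfd with h' | h'
        · exact h'
        · exact absurd h' had'
      have hg : g = 0 := by
        have hgd : g * (a - d) = 0 := by linear_combination -E10
        rcases mul_eq_zero.mp hgd with h' | h'
        · exact h'
        · exact absurd h' had'
      refine ⟨e - ((e - hh) / (a - d)) * a, (e - hh) / (a - d), ?_⟩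
      ext i j
      fin_cases i <;> fin_cases j <;>
        simp only [Matrix.add_apply, Matrix.smul_apply, Matrix.one_apply_eq, Matrix.one_apply_ne,
          Matrix.one_apply, Fin.zero_eta, Fin.mk_one, ne_eq, smul_eq_mul, if_true, if_false,
          zero_ne_one, one_ne_zero, reduceCtorEq, ite_true, ite_false, Fin.isValue]
      · ring
      · rw [← hf', ← hb', hf, hb]; ring
      · rw [← hg', ← hc', hg, hc]; ring
      · field_simp
        ring

end MatrixLemmas

section SLBasics

variable {F : Type*} [Field F] [Fintype F] [DecidableEq F]

local notation "SL2" => Matrix.SpecialLinearGroup (Fin 2) F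

/-- noncentral elements of SL2 are exactly the non-scalar ones (entrywise). -/
lemma SL2_noncentral_iff (x : SL2) :
    x ∉ Subgroup.center SL2 ↔
      ¬((x : Matrix (Fin 2) (Fin 2) F) 0 1 = 0 ∧ (x : Matrix (Fin 2) (Fin 2) F) 1 0 = 0 ∧
        (x : Matrix (Fin 2) (Fin 2) F) 0 0 = (x : Matrix (Fin 2) (Fin 2) F) 1 1) := by
  rw [not_iff_not]
  constructor
  · intro hx
    obtain ⟨r, -, hr⟩ := Matrix.SpecialLinearGroup.mem_center_iff.mp hx
    refine ⟨?_, ?_, ?_⟩ <;> rw [← hr] <;>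
      simp [Matrix.scalar_apply, Matrix.diagonal_apply]
  · rintro ⟨h1, h2, h3⟩
    rw [Matrix.SpecialLinearGroup.mem_center_iff]
    refine ⟨(x : Matrix (Fin 2) (Fin 2) F) 0 0, ?_, ?_⟩
    · have hdet : ((x : Matrix (Fin 2) (Fin 2) F)).det = 1 := x.2
      rw [Matrix.det_fin_two, h1, h3] at hdet
      simp only [Fintype.card_fin]
      rw [h3, sq]
      linear_combination hdet
    · ext i j
      fin_cases i <;> fin_cases j <;>
        simp [Matrix.scalar_apply, Matrix.diagonal_apply, h1, h2, h3]

lemma SL2_commute_iff (x y : SL2) :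
    Commute x y ↔ (x : Matrix (Fin 2) (Fin 2) F) * y = y * (x : Matrix (Fin 2) (Fin 2) F) := by
  constructor
  · intro h
    have := congrArg (Subtype.val) h
    simpa using this
  · intro h
    exact Subtype.ext (by simpa using h)

/-- SL(2,F) is an AC group: centralizers of noncentral elements are abelian. -/
lemma SL2_AC (x y w : SL2) (hx : x ∉ Subgroup.center SL2)
    (h1 : Commute x y) (h2 : Commute x w) : Commute y w := by
  rw [SL2_commute_iff] at h1 h2 ⊢
  obtain ⟨α, β, hy⟩ := mat_comm_struct x.1 y.1 ((SL2_noncentral_iff x).mp hx) h1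
  obtain ⟨γ, δ, hw⟩ := mat_comm_struct x.1 w.1 ((SL2_noncentral_iff x).mp hx) h2
  rw [hy, hw]
  simp only [Matrix.add_mul, Matrix.mul_add, Matrix.smul_mul, Matrix.mul_smul, Matrix.one_mul,
    Matrix.mul_one, smul_smul]
  module

lemma card_sq_one_s14 (hF2 : (2 : F) ≠ 0) : Nat.card {r : F // r ^ 2 = 1} = 2 := by
  have hs : {r : F | r ^ 2 = 1} = {1, -1} := by
    ext r
    simp only [Set.mem_setOf_eq, Set.mem_insert_iff, Set.mem_singleton_iff]
    constructor
    · intro h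
      have : (r - 1) * (r + 1) = 0 := by linear_combination h
      rcases mul_eq_zero.mp this with h' | h'
      · left; linear_combination h'
      · right; linear_combination h'
    · rintro (rfl | rfl) <;> ring
  have h1 : (1 : F) ≠ -1 := by
    intro h
    exact hF2 (by linear_combination h)
  calc Nat.card {r : F // r ^ 2 = 1} = ({1, -1} : Set F).ncard := by
        rw [← hs, ← Nat.card_coe_set_eq]
        rfl
    _ = 2 := Set.ncard_pair h1

/-- The center of SL(2,F) is in bijection with square roots of 1. -/
noncomputable def centerEquivSq : ↥(Subgroup.center SL2) ≃ {r : F // r ^ 2 = 1} where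
  toFun A := ⟨(A.1 : Matrix (Fin 2) (Fin 2) F) 0 0, by
    have hdet : ((A.1 : Matrix (Fin 2) (Fin 2) F)).det = 1 := A.1.2
    have hsc := Matrix.SpecialLinearGroup.scalar_eq_coe_self_center A 0
    rw [← hsc] at hdet
    simp only [Matrix.det_fin_two, Matrix.scalar_apply, Matrix.diagonal_apply] at hdet
    simpa [sq] using hdet⟩
  invFun r := ⟨⟨Matrix.scalar (Fin 2) r.1, by
      simp only [Matrix.det_fin_two, Matrix.scalar_apply, Matrix.diagonal_apply]
      simpa [sq] using r.2⟩,
    Matrix.SpecialLinearGroup.mem_center_iff.mpr ⟨r.1, by simpa using r.2, rfl⟩⟩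
  left_inv A := by
    apply Subtype.ext
    apply Subtype.ext
    exact Matrix.SpecialLinearGroup.scalar_eq_coe_self_center A 0
  right_inv r := by
    apply Subtype.ext
    simp [Matrix.scalar_apply]

lemma card_center_SL2 (hF2 : (2 : F) ≠ 0) : Nat.card ↥(Subgroup.center SL2) = 2 := by
  rw [Nat.card_congr (centerEquivSq), card_sq_one_s14 hF2]

end SLBasics

section SLCard

variable (F : Type*) [Field F] [Fintype F] [DecidableEq F]

local notation "SL2" => Matrix.SpecialLinearGroup (Fin 2) F
local notation "GL2" => Matrix.GeneralLinearGroup (Fin 2) F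

noncomputable instance : Fintype SL2 := Fintype.ofFinite _

lemma det_GL2_surjective :
    Function.Surjective (Matrix.GeneralLinearGroup.det : GL2 →* Fˣ) := by
  intro u
  refine ⟨⟨!![(u : F), 0; 0, 1], !![(u⁻¹ : Fˣ), 0; 0, 1], ?_, ?_⟩, ?_⟩
  · rw [Matrix.mul_fin_two]
    ext i j
    fin_cases i <;> fin_cases j <;> simp
  · rw [Matrix.mul_fin_two]
    ext i j
    fin_cases i <;> fin_cases j <;> simp
  · apply Units.ext
    show Matrix.det _ = _
    rw [Matrix.det_fin_two_of]
    simp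

/-- SL2 is equivalent to the kernel of the determinant on GL2. -/
def SL2equivKer : SL2 ≃ ↥(Matrix.GeneralLinearGroup.det : GL2 →* Fˣ).ker where
  toFun s := ⟨Matrix.SpecialLinearGroup.toGL s, by
    rw [MonoidHom.mem_ker]
    apply Units.ext
    show Matrix.det _ = _
    exact s.2⟩
  invFun k := ⟨(k.1 : Matrix (Fin 2) (Fin 2) F), by
    have := k.2
    rw [MonoidHom.mem_ker] at this
    exact congrArg Units.val this⟩
  left_inv s := rfl
  right_inv k := by
    apply Subtype.ext
    apply Units.ext
    rfl

lemma card_SL2 : Nat.card SL2 = Fintype.card F ^ 3 - Fintype.card F := by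
  set q := Fintype.card F with hq
  have hq2 : 2 ≤ q := Fintype.one_lt_card
  have hGL : Nat.card GL2 = (q ^ 2 - 1) * (q ^ 2 - q) := by
    rw [Matrix.card_GL_field]
    rw [Fin.prod_univ_two]
    simp [pow_one]
    rfl
  have hker := Subgroup.card_eq_card_quotient_mul_card_subgroup
    (Matrix.GeneralLinearGroup.det : GL2 →* Fˣ).ker
  have hquot : Nat.card (GL2 ⧸ (Matrix.GeneralLinearGroup.det : GL2 →* Fˣ).ker) = q - 1 := by
    rw [Nat.card_congr (QuotientGroup.quotientKerEquivOfSurjective _ (det_GL2_surjective F)).toEquiv]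
    rw [Nat.card_eq_fintype_card, Fintype.card_units, hq]
  have hsl : Nat.card SL2 = Nat.card ↥(Matrix.GeneralLinearGroup.det : GL2 →* Fˣ).ker :=
    Nat.card_congr (SL2equivKer F)
  rw [hGL, hquot, ← hsl] at hker
  -- hker : (q^2-1)*(q^2-q) = (q-1) * Nat.card SL2
  have key : (q ^ 2 - 1) * (q ^ 2 - q) = (q ^ 3 - q) * (q - 1) := by
    have h1 : 1 ≤ q := by omega
    have h2 : q ≤ q ^ 2 := by nlinarith
    have h3 : 1 ≤ q ^ 2 := by nlinarith
    have h4 : q ≤ q ^ 3 := by nlinarith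
    zify [h1, h2, h3, h4]
    ring
  rw [key] at hker
  have hq1 : 0 < q - 1 := by omega
  nlinarith [hker, Nat.card SL2]

end SLCard

section Centralizers

variable {F : Type*} [Field F] [Fintype F] [DecidableEq F]
local notation "SL2" => Matrix.SpecialLinearGroup (Fin 2) F

open Matrix

/-- The unipotent element. -/
def unipSL : SL2 := ⟨!![1, 1; 0, 1], by simp [Matrix.det_fin_two_of]⟩

lemma unipSL_noncentral : (unipSL : SL2) ∉ Subgroup.center SL2 := by
  rw [SL2_noncentral_iff]
  intro h
  have := h.1
  simp [unipSL] at this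

lemma unip_comm_entries (y : SL2) (h : y * (unipSL : SL2) = unipSL * y) :
    (y : Matrix (Fin 2) (Fin 2) F) 1 0 = 0 ∧
      (y : Matrix (Fin 2) (Fin 2) F) 1 1 = (y : Matrix (Fin 2) (Fin 2) F) 0 0 := by
  have h' : (!![1,1;0,1] : Matrix (Fin 2) (Fin 2) F) * (y : Matrix (Fin 2) (Fin 2) F)
      = (y : Matrix (Fin 2) (Fin 2) F) * (!![1,1;0,1] : Matrix (Fin 2) (Fin 2) F) := by
    have := congrArg Subtype.val h.symm
    exact this
  have key : ∀ i j, ((!![1,1;0,1] : Matrix (Fin 2) (Fin 2) F) * (y : Matrix (Fin 2) (Fin 2) F)) i j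
      = ((y : Matrix (Fin 2) (Fin 2) F) * (!![1,1;0,1] : Matrix (Fin 2) (Fin 2) F)) i j :=
    fun i j => by rw [h']
  have E00 := key 0 0
  have E01 := key 0 1
  simp only [Matrix.mul_apply, Fin.sum_univ_two, Matrix.cons_val', Matrix.cons_val_zero,
    Matrix.cons_val_one, Matrix.head_cons, Matrix.head_fin_const, Matrix.empty_val',
    Matrix.cons_val_fin_one, Matrix.of_apply] at E00 E01
  constructor
  · linear_combination E00
  · linear_combination E01

/-- The centralizer of the unipotent element, as an explicit equivalence. -/
noncomputable def unipCentEquiv :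
    ↥(Subgroup.centralizer ({unipSL} : Set SL2)) ≃ {r : F // r ^ 2 = 1} × F where
  toFun y := by
    refine ⟨⟨(y.1 : Matrix (Fin 2) (Fin 2) F) 0 0, ?_⟩, (y.1 : Matrix (Fin 2) (Fin 2) F) 0 1⟩
    have hmem := Subgroup.mem_centralizer_singleton_iff.mp y.2
    obtain ⟨h10, h11⟩ := unip_comm_entries y.1 hmem
    have hdet : ((y.1 : Matrix (Fin 2) (Fin 2) F)).det = 1 := y.1.2
    rw [Matrix.det_fin_two, h10, h11] at hdet
    rw [sq]
    linear_combination hdet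
  invFun p :=
    ⟨⟨!![p.1.1, p.2; 0, p.1.1], by
        rw [Matrix.det_fin_two_of]
        have := p.1.2
        rw [sq] at this
        linear_combination this⟩, by
      apply Subgroup.mem_centralizer_singleton_iff.mpr
      refine (SL2_commute_iff _ unipSL).mpr ?_
      show !![p.1.1, p.2; 0, p.1.1] * (!![1,1;0,1] : Matrix (Fin 2) (Fin 2) F)
        = (!![1,1;0,1] : Matrix (Fin 2) (Fin 2) F) * !![p.1.1, p.2; 0, p.1.1]
      rw [Matrix.mul_fin_two, Matrix.mul_fin_two]
      congr 1 <;> ring⟩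
  left_inv y := by
    apply Subtype.ext
    apply Subtype.ext
    have hmem := Subgroup.mem_centralizer_singleton_iff.mp y.2
    obtain ⟨h10, h11⟩ := unip_comm_entries y.1 hmem
    ext i j
    fin_cases i <;> fin_cases j <;> simp [h10, h11]
  right_inv p := by
    refine Prod.ext (Subtype.ext ?_) ?_ <;> simp

lemma card_unip_centralizer (hF2 : (2 : F) ≠ 0) :
    Nat.card ↥(Subgroup.centralizer ({unipSL} : Set SL2)) = 2 * Fintype.card F := by
  rw [Nat.card_congr unipCentEquiv, Nat.card_prod, card_sq_one_s14 hF2, Nat.card_eq_fintype_card]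


/-- Diagonal element of SL2. -/
def diagSL (a : Fˣ) : SL2 :=
  ⟨!![(a : F), 0; 0, ((a⁻¹ : Fˣ) : F)], by rw [Matrix.det_fin_two_of]; simp⟩

lemma diag_ne (a : Fˣ) (ha : (a : F) ^ 2 ≠ 1) : (a : F) ≠ ((a⁻¹ : Fˣ) : F) := by
  intro h
  apply ha
  rw [sq]
  nth_rewrite 2 [h]
  rw [← Units.val_mul, mul_inv_cancel, Units.val_one]

lemma diagSL_noncentral (a : Fˣ) (ha : (a : F) ^ 2 ≠ 1) :
    (diagSL a : SL2) ∉ Subgroup.center SL2 := by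
  rw [SL2_noncentral_iff]
  rintro ⟨-, -, h⟩
  exact diag_ne a ha (by simpa [diagSL] using h)

lemma diag_comm_entries (a : Fˣ) (ha : (a : F) ^ 2 ≠ 1) (y : SL2)
    (h : y * diagSL a = diagSL a * y) :
    (y : Matrix (Fin 2) (Fin 2) F) 0 1 = 0 ∧ (y : Matrix (Fin 2) (Fin 2) F) 1 0 = 0 := by
  have h' : (!![(a : F), 0; 0, ((a⁻¹ : Fˣ) : F)] : Matrix (Fin 2) (Fin 2) F)
        * (y : Matrix (Fin 2) (Fin 2) F)
      = (y : Matrix (Fin 2) (Fin 2) F) * (!![(a : F), 0; 0, ((a⁻¹ : Fˣ) : F)]) := by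
    have := congrArg Subtype.val h.symm
    exact this
  have key : ∀ i j, ((!![(a : F), 0; 0, ((a⁻¹ : Fˣ) : F)] : Matrix (Fin 2) (Fin 2) F)
      * (y : Matrix (Fin 2) (Fin 2) F)) i j
      = ((y : Matrix (Fin 2) (Fin 2) F) * (!![(a : F), 0; 0, ((a⁻¹ : Fˣ) : F)])) i j :=
    fun i j => by rw [h']
  have E01 := key 0 1
  have E10 := key 1 0
  simp only [Matrix.mul_apply, Fin.sum_univ_two, Matrix.cons_val', Matrix.cons_val_zero,
    Matrix.cons_val_one, Matrix.head_cons, Matrix.head_fin_const, Matrix.empty_val',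
    Matrix.cons_val_fin_one, Matrix.of_apply] at E01 E10
  have hne := sub_ne_zero.mpr (diag_ne a ha)
  constructor
  · have : (y : Matrix (Fin 2) (Fin 2) F) 0 1 * ((a : F) - ((a⁻¹ : Fˣ) : F)) = 0 := by
      linear_combination E01
    rcases mul_eq_zero.mp this with h'' | h''
    · exact h''
    · exact absurd h'' hne
  · have : (y : Matrix (Fin 2) (Fin 2) F) 1 0 * ((a : F) - ((a⁻¹ : Fˣ) : F)) = 0 := by
      linear_combination -E10
    rcases mul_eq_zero.mp this with h'' | h''
    · exact h''
    · exact absurd h'' hne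

/-- The centralizer of a diagonal element with distinct eigenvalues. -/
noncomputable def diagCentEquiv (a : Fˣ) (ha : (a : F) ^ 2 ≠ 1) :
    ↥(Subgroup.centralizer ({diagSL a} : Set SL2)) ≃ Fˣ where
  toFun y :=
    Units.mk ((y.1 : Matrix (Fin 2) (Fin 2) F) 0 0) ((y.1 : Matrix (Fin 2) (Fin 2) F) 1 1)
      (by
        obtain ⟨h01, h10⟩ :=
          diag_comm_entries a ha y.1 (Subgroup.mem_centralizer_singleton_iff.mp y.2)
        have hdet : ((y.1 : Matrix (Fin 2) (Fin 2) F)).det = 1 := y.1.2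
        rw [Matrix.det_fin_two, h01, h10] at hdet
        linear_combination hdet)
      (by
        obtain ⟨h01, h10⟩ :=
          diag_comm_entries a ha y.1 (Subgroup.mem_centralizer_singleton_iff.mp y.2)
        have hdet : ((y.1 : Matrix (Fin 2) (Fin 2) F)).det = 1 := y.1.2
        rw [Matrix.det_fin_two, h01, h10] at hdet
        linear_combination hdet)
  invFun t :=
    ⟨⟨!![(t : F), 0; 0, ((t⁻¹ : Fˣ) : F)], by rw [Matrix.det_fin_two_of]; simp⟩, by
      apply Subgroup.mem_centralizer_singleton_iff.mpr
      refine (SL2_commute_iff _ (diagSL a)).mpr ?_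
      show !![(t : F), 0; 0, ((t⁻¹ : Fˣ) : F)]
            * (!![(a : F), 0; 0, ((a⁻¹ : Fˣ) : F)] : Matrix (Fin 2) (Fin 2) F)
          = !![(a : F), 0; 0, ((a⁻¹ : Fˣ) : F)] * !![(t : F), 0; 0, ((t⁻¹ : Fˣ) : F)]
      rw [Matrix.mul_fin_two, Matrix.mul_fin_two]
      congr 1 <;> ring⟩
  left_inv y := by
    obtain ⟨h01, h10⟩ :=
      diag_comm_entries a ha y.1 (Subgroup.mem_centralizer_singleton_iff.mp y.2)
    apply Subtype.ext
    apply Subtype.ext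
    ext i j
    fin_cases i <;> fin_cases j <;> simp [h01, h10, Units.inv_mk]
  right_inv t := by
    apply Units.ext
    simp

lemma card_diag_centralizer (a : Fˣ) (ha : (a : F) ^ 2 ≠ 1) :
    Nat.card ↥(Subgroup.centralizer ({diagSL a} : Set SL2)) = Fintype.card F - 1 := by
  rw [Nat.card_congr (diagCentEquiv a ha), Nat.card_eq_fintype_card, Fintype.card_units]

lemma card_quad_le (t : F) :
    Nat.card {p : F × F // p.1 ^ 2 + p.1 * p.2 * t + p.2 ^ 2 = 1} ≤ Fintype.card F * 2 := by
  classical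
  let ch : F → F := fun β => if h : ∃ α, α ^ 2 + α * β * t + β ^ 2 = 1 then Classical.choose h else 0
  have hchQ : ∀ β α, α ^ 2 + α * β * t + β ^ 2 = 1 → (ch β) ^ 2 + (ch β) * β * t + β ^ 2 = 1 := by
    intro β α hα
    have hd : ch β = Classical.choose (⟨α, hα⟩ : ∃ α, α ^ 2 + α * β * t + β ^ 2 = 1) :=
      dif_pos ⟨α, hα⟩
    rw [hd]
    exact Classical.choose_spec (⟨α, hα⟩ : ∃ α, α ^ 2 + α * β * t + β ^ 2 = 1)
  have root2 : ∀ β α α', α ^ 2 + α * β * t + β ^ 2 = 1 → α' ^ 2 + α' * β * t + β ^ 2 = 1 →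
      α ≠ ch β → α' ≠ ch β → α = α' := by
    intro β α α' h1 h2 hne1 hne2
    have hc := hchQ β α h1
    have key : ∀ γ, γ ^ 2 + γ * β * t + β ^ 2 = 1 → γ ≠ ch β → γ = -(β * t) - ch β := by
      intro γ h3 hne
      have : (γ - ch β) * (γ + ch β + β * t) = 0 := by linear_combination h3 - hc
      rcases mul_eq_zero.mp this with h'' | h''
      · exact absurd (sub_eq_zero.mp h'') hne
      · linear_combination h''
    rw [key α h1 hne1, key α' h2 hne2]
  have hinj2 : Function.Injective
      (fun p : {p : F × F // p.1 ^ 2 + p.1 * p.2 * t + p.2 ^ 2 = 1} =>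
        ((p.1.2, decide (p.1.1 = ch p.1.2)) : F × Bool)) := by
    intro p p' hpp
    have hβ : p.1.2 = p'.1.2 := congrArg Prod.fst hpp
    have hb : decide (p.1.1 = ch p.1.2) = decide (p'.1.1 = ch p'.1.2) := congrArg Prod.snd hpp
    apply Subtype.ext
    have hq1 := p.2
    have hq2 := p'.2
    by_cases hcase : p.1.1 = ch p.1.2
    · have : decide (p'.1.1 = ch p'.1.2) = true := by rw [← hb]; simpa using hcase
      have hcase' : p'.1.1 = ch p'.1.2 := by simpa using this
      exact Prod.ext (by rw [hcase, hcase', hβ]) hβ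
    · have : decide (p'.1.1 = ch p'.1.2) = false := by rw [← hb]; simpa using hcase
      have hcase' : ¬(p'.1.1 = ch p'.1.2) := by simpa using this
      refine Prod.ext ?_ hβ
      exact root2 p.1.2 p.1.1 p'.1.1 hq1 (hβ ▸ hq2) hcase (by rw [hβ]; exact hcase')
  calc Nat.card {p : F × F // p.1 ^ 2 + p.1 * p.2 * t + p.2 ^ 2 = 1}
      ≤ Nat.card (F × Bool) := Nat.card_le_card_of_injective _ hinj2
    _ = Fintype.card F * 2 := by
        rw [Nat.card_prod, Nat.card_eq_fintype_card, Nat.card_eq_fintype_card, Fintype.card_bool]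

/-- General bound: centralizers of noncentral elements have at most 2q elements. -/
lemma card_centralizer_le (x : SL2) (hx : x ∉ Subgroup.center SL2) :
    Nat.card ↥(Subgroup.centralizer ({x} : Set SL2)) ≤ 2 * Fintype.card F := by
  classical
  have hxdet : ((x : Matrix (Fin 2) (Fin 2) F)).det = 1 := x.2
  rw [Matrix.det_fin_two] at hxdet
  set t : F := (x : Matrix (Fin 2) (Fin 2) F) 0 0 + (x : Matrix (Fin 2) (Fin 2) F) 1 1 with ht
  have step1 : ∀ y : ↥(Subgroup.centralizer ({x} : Set SL2)), ∃ p : F × F,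
      (p.1 ^ 2 + p.1 * p.2 * t + p.2 ^ 2 = 1) ∧
      (y.1 : Matrix (Fin 2) (Fin 2) F)
        = p.1 • (1 : Matrix (Fin 2) (Fin 2) F) + p.2 • (x : Matrix (Fin 2) (Fin 2) F) := by
    intro y
    have hcomm : (x : Matrix (Fin 2) (Fin 2) F) * (y.1 : Matrix (Fin 2) (Fin 2) F)
        = (y.1 : Matrix (Fin 2) (Fin 2) F) * (x : Matrix (Fin 2) (Fin 2) F) := by
      have := congrArg Subtype.val (Subgroup.mem_centralizer_singleton_iff.mp y.2).symm
      simpa using this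
    obtain ⟨α, β, hy⟩ := mat_comm_struct (x : Matrix (Fin 2) (Fin 2) F)
      (y.1 : Matrix (Fin 2) (Fin 2) F) ((SL2_noncentral_iff x).mp hx) hcomm
    refine ⟨⟨α, β⟩, ?_, hy⟩
    have hdet : ((y.1 : Matrix (Fin 2) (Fin 2) F)).det = 1 := y.1.2
    rw [hy] at hdet
    simp only [Matrix.det_fin_two, Matrix.add_apply, Matrix.smul_apply, Matrix.one_apply_eq,
      Matrix.one_apply_ne, Matrix.one_apply, smul_eq_mul, if_true, if_false, zero_ne_one,
      one_ne_zero, ne_eq, reduceCtorEq, ite_true, ite_false, Fin.isValue] at hdet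
    rw [ht]
    linear_combination hdet - β ^ 2 * hxdet
  have hinj1 : ∃ f : ↥(Subgroup.centralizer ({x} : Set SL2)) →
      {p : F × F // p.1 ^ 2 + p.1 * p.2 * t + p.2 ^ 2 = 1}, Function.Injective f := by
    refine ⟨fun y => ⟨(step1 y).choose, (step1 y).choose_spec.1⟩, ?_⟩
    intro y y' hyy
    have h1 := (step1 y).choose_spec.2
    have h2 := (step1 y').choose_spec.2
    have e1 : (step1 y).choose = (step1 y').choose := congrArg Subtype.val hyy
    apply Subtype.ext
    apply Subtype.ext
    rw [e1] at h1
    exact h1.trans h2.symm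
  obtain ⟨f, hf⟩ := hinj1
  calc Nat.card ↥(Subgroup.centralizer ({x} : Set SL2))
      ≤ Nat.card {p : F × F // p.1 ^ 2 + p.1 * p.2 * t + p.2 ^ 2 = 1} :=
        Nat.card_le_card_of_injective f hf
    _ ≤ Fintype.card F * 2 := card_quad_le t
    _ = 2 * Fintype.card F := mul_comm _ _

end Centralizers
section GroupLemmas

variable {G : Type*} [Group G]

/-- If there are finitely many noncentral elements and at least one, the group is finite. -/
lemma finite_of_finite_noncentral [Finite {x : G // x ∉ Subgroup.center G}]
    (h : Nonempty {x : G // x ∉ Subgroup.center G}) : Finite G := by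
  classical
  obtain ⟨⟨x₀, hx₀⟩⟩ := h
  have hcen : Finite ↥(Subgroup.center G) := by
    have : Function.Injective (fun z : ↥(Subgroup.center G) =>
        (⟨x₀ * z.1, fun hc => hx₀ (by
          have : (x₀ * z.1) * (z.1)⁻¹ ∈ Subgroup.center G :=
            (Subgroup.center G).mul_mem hc ((Subgroup.center G).inv_mem z.2)
          simpa using this)⟩ : {x : G // x ∉ Subgroup.center G})) := by
      intro z z' hzz
      have : x₀ * z.1 = x₀ * z'.1 := congrArg Subtype.val hzz
      exact Subtype.ext (mul_left_cancel this)
    exact Finite.of_injective _ this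
  have : Finite ({x : G // x ∈ Subgroup.center G} ⊕ {x : G // x ∉ Subgroup.center G}) := by
    have : Finite {x : G // x ∈ Subgroup.center G} := hcen
    infer_instance
  exact Finite.of_equiv _ (Equiv.sumCompl (fun x => x ∈ Subgroup.center G))

/-- Cardinality split of a finite group into central and noncentral elements. -/
lemma card_split_s14 [Finite G] :
    Nat.card G = Nat.card ↥(Subgroup.center G) + Nat.card {x : G // x ∉ Subgroup.center G} := by
  classical
  rw [← Nat.card_congr (Equiv.sumCompl (fun x => x ∈ Subgroup.center G)), Nat.card_sum]

/-- Cardinality split of a centralizer into central and noncentral commuting elements. -/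
lemma centralizer_split [Finite G] (x : G) :
    Nat.card ↥(Subgroup.centralizer ({x} : Set G)) =
      Nat.card ↥(Subgroup.center G) +
        Nat.card {w : {a : G // a ∉ Subgroup.center G} // Commute x w.1} := by
  classical
  have e : ↥(Subgroup.centralizer ({x} : Set G)) ≃
      ↥(Subgroup.center G) ⊕ {w : {a : G // a ∉ Subgroup.center G} // Commute x w.1} := by
    refine Equiv.ofBijective (fun y =>
      if h : y.1 ∈ Subgroup.center G then Sum.inl ⟨y.1, h⟩
      else Sum.inr ⟨⟨y.1, h⟩, ?_⟩) ⟨?_, ?_⟩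
    · exact (Subgroup.mem_centralizer_singleton_iff.mp y.2).symm
    · intro y y' hyy
      by_cases h : y.1 ∈ Subgroup.center G <;> by_cases h' : y'.1 ∈ Subgroup.center G <;>
        simp only [dif_pos, dif_neg, h, h', Sum.inl.injEq, Sum.inr.injEq, Subtype.mk.injEq,
          reduceCtorEq, not_false_iff] at hyy
      · exact Subtype.ext hyy
      · exact Subtype.ext (congrArg (fun w => w.1.1) hyy)
    · rintro (⟨z, hz⟩ | ⟨⟨w, hw⟩, hcw⟩)
      · refine ⟨⟨z, Subgroup.center_le_centralizer ({x} : Set G) hz⟩, ?_⟩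
        simp [hz]
      · refine ⟨⟨w, Subgroup.mem_centralizer_singleton_iff.mpr hcw.symm⟩, ?_⟩
        simp [hw]
  rw [Nat.card_congr e, Nat.card_sum]

lemma card_stabilizer_eq_card_centralizer (x : G) :
    Nat.card ↥(MulAction.stabilizer (ConjAct G) x) =
      Nat.card ↥(Subgroup.centralizer ({x} : Set G)) := by
  apply Nat.card_congr
  refine ⟨fun s => ⟨ConjAct.ofConjAct s.1, ?_⟩, fun c => ⟨ConjAct.toConjAct c.1, ?_⟩, ?_, ?_⟩
  · refine (SetLike.ext_iff.mp (Subgroup.centralizer_eq_comap_stabilizer x) _).mpr ?_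
    refine Subgroup.mem_comap.mpr ?_
    exact s.2
  · have := (SetLike.ext_iff.mp (Subgroup.centralizer_eq_comap_stabilizer x) _).mp c.2
    exact this
  · intro s; rfl
  · intro c; rfl

/-- the conjugation orbit: if `x` lies in an abelian normal subgroup, the orbit of `x`
is inside the centralizer of `x`, which gives a strong cardinality bound. -/
lemma caseA [Finite G] (c : ℕ)
    (hbound : ∀ y : G, y ∉ Subgroup.center G →
      Nat.card ↥(Subgroup.centralizer ({y} : Set G)) ≤ c)
    (M : Subgroup G) (hMn : M.Normal) (hMc : ∀ a ∈ M, ∀ b ∈ M, a * b = b * a)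
    (x : G) (hxM : x ∈ M) (hx : x ∉ Subgroup.center G) :
    Nat.card G ≤ c * c := by
  classical
  letI : Fintype G := Fintype.ofFinite G
  letI : Fintype ↥(MulAction.orbit (ConjAct G) x) := Fintype.ofFinite _
  letI : Fintype ↥(MulAction.stabilizer (ConjAct G) x) := Fintype.ofFinite _
  have horb : (MulAction.orbit (ConjAct G) x : Set G) ⊆
      ↑(Subgroup.centralizer ({x} : Set G)) := by
    rintro z ⟨g, rfl⟩
    have hz : g • x ∈ M := by
      rw [ConjAct.smul_def]
      exact hMn.conj_mem x hxM (ConjAct.ofConjAct g)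
    exact Subgroup.mem_centralizer_singleton_iff.mpr (hMc _ hz _ hxM)
  have h1 : Nat.card ↥(MulAction.orbit (ConjAct G) x) ≤ c := by
    calc Nat.card ↥(MulAction.orbit (ConjAct G) x)
        ≤ Nat.card ↥(Subgroup.centralizer ({x} : Set G)) :=
          Nat.card_le_card_of_injective _ (Set.inclusion_injective horb)
      _ ≤ c := hbound x hx
  have h2 : Nat.card ↥(MulAction.stabilizer (ConjAct G) x) ≤ c := by
    rw [card_stabilizer_eq_card_centralizer]
    exact hbound x hx
  have horbstab := MulAction.card_orbit_mul_card_stabilizer_eq_card_group (ConjAct G) x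
  have hcG : Nat.card G = Fintype.card G := Nat.card_eq_fintype_card
  have hcCA : Fintype.card (ConjAct G) = Fintype.card G := rfl
  calc Nat.card G = Fintype.card (ConjAct G) := by rw [hcG, hcCA]
    _ = Fintype.card ↥(MulAction.orbit (ConjAct G) x) *
        Fintype.card ↥(MulAction.stabilizer (ConjAct G) x) := horbstab.symm
    _ ≤ c * c := by
        refine Nat.mul_le_mul ?_ ?_
        · rw [← Nat.card_eq_fintype_card]; exact h1
        · rw [← Nat.card_eq_fintype_card]; exact h2

end GroupLemmas

section CaseB

lemma arith1 (q : ℕ) (hq5 : 5 ≤ q) (h : q ^ 3 ≤ 2 * q * (2 * q) + q) : False := by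
  nlinarith [hq5, Nat.mul_le_mul hq5 (le_refl (q * q))]

lemma arith2 (q : ℕ) (hq5 : 5 ≤ q) (h : q ^ 3 ≤ 8 * (2 * q) + q) : False := by
  nlinarith [hq5, Nat.mul_le_mul hq5 (le_refl q), Nat.mul_le_mul (Nat.mul_le_mul hq5 hq5) hq5]

variable {G : Type*} [Group G]

lemma caseB [Finite G] (q : ℕ) (hq5 : 5 ≤ q)
    (hcardG : Nat.card G = q ^ 3 - q)
    (hcardZ : Nat.card ↥(Subgroup.center G) = 2)
    (hAC : ∀ x y w : G, x ∉ Subgroup.center G → Commute x y → Commute x w → Commute y w)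
    (hbound : ∀ x : G, x ∉ Subgroup.center G →
      Nat.card ↥(Subgroup.centralizer ({x} : Set G)) ≤ 2 * q)
    (hsolv : IsSolvable G)
    (hnontriv : ∃ x : G, x ∉ Subgroup.center G) : False := by
  classical
  have hqq : q ≤ q ^ 3 := Nat.le_self_pow (by norm_num) q
  -- every abelian normal subgroup is central
  have hA : ∀ M : Subgroup G, M.Normal → (∀ a ∈ M, ∀ b ∈ M, a * b = b * a) →
      M ≤ Subgroup.center G := by
    intro M hMn hMc
    by_contra hnc
    obtain ⟨x, hxM, hx⟩ := SetLike.not_le_iff_exists.mp hnc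
    have hle := caseA (2 * q) hbound M hMn hMc x hxM hx
    rw [hcardG] at hle
    exact arith1 q hq5 (Nat.sub_le_iff_le_add.mp hle)
  -- pass to the quotient by the center
  set Z := Subgroup.center G with hZdef
  obtain ⟨x₀, hx₀⟩ := hnontriv
  haveI hQnontriv : Nontrivial (G ⧸ Z) := by
    refine ⟨⟨QuotientGroup.mk x₀, 1, ?_⟩⟩
    intro h
    exact hx₀ ((QuotientGroup.eq_one_iff x₀).mp h)
  haveI hQsolv : Group.IsSolvable (G ⧸ Z) := by haveI : Group.IsSolvable G := hsolv; infer_instance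
  have hex : ∃ n, derivedSeries (G ⧸ Z) n = ⊥ := (isSolvable_def _).mp hQsolv
  set n₀ := Nat.find hex with hn₀def
  have hn₀ : derivedSeries (G ⧸ Z) n₀ = ⊥ := Nat.find_spec hex
  have hn₀pos : n₀ ≠ 0 := by
    intro h0
    rw [h0, derivedSeries_zero] at hn₀
    obtain ⟨a, b, hab⟩ := hQnontriv
    apply hab
    have ha : a ∈ (⊤ : Subgroup (G ⧸ Z)) := trivial
    have hb : b ∈ (⊤ : Subgroup (G ⧸ Z)) := trivial
    rw [hn₀, Subgroup.mem_bot] at ha hb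
    rw [ha, hb]
  obtain ⟨k, hk⟩ : ∃ k, n₀ = k + 1 := ⟨n₀ - 1, by omega⟩
  set M : Subgroup (G ⧸ Z) := derivedSeries (G ⧸ Z) k with hM
  have hMne : M ≠ ⊥ := Nat.find_min hex (by omega)
  have hMsucc : ⁅M, M⁆ = ⊥ := by
    rw [hM, ← derivedSeries_succ, ← hk]
    exact hn₀
  have hMcomm : ∀ a ∈ M, ∀ b ∈ M, a * b = b * a := by
    intro a ha b hb
    have h := Subgroup.commutator_mem_commutator ha hb
    rw [hMsucc, Subgroup.mem_bot] at h
    exact commutatorElement_eq_one_iff_commute.mp h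
  -- pull back to G
  set N : Subgroup G := Subgroup.comap (QuotientGroup.mk' Z) M with hN
  haveI hNnormal : N.Normal := (derivedSeries_normal _ _).comap _
  have hNcomm : ∀ n ∈ N, ∀ m ∈ N, n * m * n⁻¹ * m⁻¹ ∈ Z := by
    intro n hn m hm
    rw [← QuotientGroup.eq_one_iff]
    have h1 : QuotientGroup.mk' Z n ∈ M := hn
    have h2 : QuotientGroup.mk' Z m ∈ M := hm
    have h := hMcomm _ h1 _ h2
    show ((QuotientGroup.mk' Z) n) * ((QuotientGroup.mk' Z) m) * ((QuotientGroup.mk' Z) n)⁻¹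
        * ((QuotientGroup.mk' Z) m)⁻¹ = 1
    rw [h]
    group
  -- N is not contained in the center
  have hNnc : ¬ N ≤ Z := by
    intro hle
    obtain ⟨⟨mbar, hmbar⟩, hmne⟩ := Subgroup.ne_bot_iff_exists_ne_one.mp hMne
    obtain ⟨m, rfl⟩ := QuotientGroup.mk'_surjective Z mbar
    have hmN : m ∈ N := hmbar
    have : QuotientGroup.mk' Z m = 1 := (QuotientGroup.eq_one_iff m).mpr (hle hmN)
    exact hmne (Subtype.ext this)
  -- N cannot be abelian
  have hNnonab : ¬ (∀ a ∈ N, ∀ b ∈ N, a * b = b * a) := fun h => hNnc (hA N hNnormal h)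
  push_neg at hNnonab
  obtain ⟨x, hxN, y, hyN, hxy⟩ := hNnonab
  have hxZ : x ∉ Z := fun h => hxy ((Subgroup.mem_center_iff.mp h y).symm)
  have hyZ : y ∉ Z := fun h => hxy (Subgroup.mem_center_iff.mp h x)
  -- the distinguished central element
  set ζ : G := y * x * y⁻¹ * x⁻¹ with hζdef
  have hζZ : ζ ∈ Z := hNcomm y hyN x hxN
  have hζc : ∀ g : G, g * ζ = ζ * g := fun g => (Subgroup.mem_center_iff.mp hζZ g)
  have hζ1 : ζ ≠ 1 := by
    intro h
    apply hxy
    open commutatorElement in have h' : ⁅y, x⁆ = 1 := h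
    exact (commutatorElement_eq_one_iff_commute.mp h').symm
  -- Z = {1, ζ}
  have hZeq : ∀ w ∈ Z, w = 1 ∨ w = ζ := by
    have hsub : ({1, ζ} : Set G) ⊆ (Z : Set G) := by
      rintro z (rfl | rfl)
      · exact Z.one_mem
      · exact hζZ
    have hZcard : (Z : Set G).ncard = 2 := by
      rw [← Nat.card_coe_set_eq]
      exact hcardZ
    have heq : ({1, ζ} : Set G) = (Z : Set G) :=
      Set.eq_of_subset_of_ncard_le hsub
        (by rw [hZcard, Set.ncard_pair (Ne.symm hζ1)]) (Set.toFinite _)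
    intro w hw
    have : w ∈ ({1, ζ} : Set G) := by rw [heq]; exact hw
    simpa using this
  have hdisjx : ∀ n ∈ N, n * x * n⁻¹ * x⁻¹ = 1 ∨ n * x * n⁻¹ * x⁻¹ = ζ :=
    fun n hn => hZeq _ (hNcomm n hn x hxN)
  -- centralizer of N is normal
  have hCentN : (Subgroup.centralizer (N : Set G)).Normal := by
    constructor
    intro c hc g
    rw [Subgroup.mem_centralizer_iff] at hc ⊢
    intro m hm
    have hm' : g⁻¹ * m * g ∈ N := by
      have := hNnormal.conj_mem m hm g⁻¹
      simpa [mul_assoc] using this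
    have hcm := hc _ hm'
    calc m * (g * c * g⁻¹) = g * ((g⁻¹ * m * g) * c) * g⁻¹ := by group
      _ = g * (c * (g⁻¹ * m * g)) * g⁻¹ := by rw [hcm]
      _ = (g * c * g⁻¹) * m := by group
  -- elements of N commuting with all of N are central
  have hZN : N ⊓ Subgroup.centralizer (N : Set G) ≤ Z := by
    apply hA
    · constructor
      intro a ha g
      exact ⟨hNnormal.conj_mem a ha.1 g, hCentN.conj_mem a ha.2 g⟩
    · intro a ha b hb
      exact Subgroup.mem_centralizer_iff.mp hb.2 a ha.1
  -- anything in N commuting with x and y is central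
  have hD : ∀ d : G, d ∈ N → Commute x d → Commute y d → d ∈ Z := by
    intro d hd hxd hyd
    apply hZN
    refine ⟨hd, Subgroup.mem_centralizer_iff.mpr ?_⟩
    intro m hm
    rcases hdisjx m hm with hcase | hcase
    · have hxm : Commute x m := by
        open commutatorElement in have h' : ⁅m, x⁆ = 1 := hcase
        exact (commutatorElement_eq_one_iff_commute.mp h').symm
      exact hAC x m d hxZ hxm hxd
    · have h1 : m * x * m⁻¹ = ζ * x := by
        rw [← hcase]; group
      have h2 : y * x * y⁻¹ = ζ * x := by rw [hζdef]; group
      have h3 : ζ * (y⁻¹ * x * y) = x := by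
        calc ζ * (y⁻¹ * x * y) = (ζ * y⁻¹) * (x * y) := by group
          _ = (y⁻¹ * ζ) * (x * y) := by rw [hζc y⁻¹]
          _ = y⁻¹ * (ζ * x) * y := by group
          _ = y⁻¹ * (y * x * y⁻¹) * y := by rw [← h2]
          _ = x := by group
      have hconj : (y⁻¹ * m) * x * (y⁻¹ * m)⁻¹ = x := by
        calc (y⁻¹ * m) * x * (y⁻¹ * m)⁻¹ = y⁻¹ * (m * x * m⁻¹) * y := by group
          _ = y⁻¹ * (ζ * x) * y := by rw [h1]
          _ = (y⁻¹ * ζ) * (x * y) := by group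
          _ = (ζ * y⁻¹) * (x * y) := by rw [← hζc y⁻¹]
          _ = ζ * (y⁻¹ * x * y) := by group
          _ = x := h3
      have hxym : Commute x (y⁻¹ * m) := (mul_inv_eq_iff_eq_mul.mp hconj).symm
      have hmd' : Commute (y⁻¹ * m) d := hAC x (y⁻¹ * m) d hxZ hxym hxd
      have hmd : Commute m d := by
        have h5 : Commute (y * (y⁻¹ * m)) d := Commute.mul_left hyd hmd'
        rwa [show y * (y⁻¹ * m) = m by group] at h5
      exact hmd
  -- |N| ≤ 8
  set f : G → G × G := fun n => (n * x * n⁻¹ * x⁻¹, n * y * n⁻¹ * y⁻¹) with hf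
  have hfib : ∀ n m : G, n ∈ N → m ∈ N → f n = f m → m⁻¹ * n ∈ Z := by
    intro n m hn hm hnm
    have e1 : n * x * n⁻¹ * x⁻¹ = m * x * m⁻¹ * x⁻¹ := congrArg Prod.fst hnm
    have e2 : n * y * n⁻¹ * y⁻¹ = m * y * m⁻¹ * y⁻¹ := congrArg Prod.snd hnm
    have key : ∀ w : G, n * w * n⁻¹ * w⁻¹ = m * w * m⁻¹ * w⁻¹ → Commute w (m⁻¹ * n) := by
      intro w he
      have he' : n * w * n⁻¹ * w⁻¹ * w = m * w * m⁻¹ * w⁻¹ * w := by rw [he]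
      have h' : n * w * n⁻¹ = m * w * m⁻¹ := by simpa [mul_assoc] using he'
      have hcj : (m⁻¹ * n) * w * (m⁻¹ * n)⁻¹ = w := by
        calc (m⁻¹ * n) * w * (m⁻¹ * n)⁻¹ = m⁻¹ * (n * w * n⁻¹) * m := by group
          _ = m⁻¹ * (m * w * m⁻¹) * m := by rw [h']
          _ = w := by group
      exact (mul_inv_eq_iff_eq_mul.mp hcj).symm
    exact hD (m⁻¹ * n) (N.mul_mem (N.inv_mem hm) hn) (key x e1) (key y e2)
  have hcardN : Nat.card ↥N ≤ 8 := by
    set rep : G × G → G := fun p => if h : ∃ m, m ∈ N ∧ f m = p then h.choose else 1 with hrep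
    have hrepN : ∀ n : G, n ∈ N → rep (f n) ∈ N ∧ f (rep (f n)) = f n := by
      intro n hn
      have hex' : ∃ m, m ∈ N ∧ f m = f n := ⟨n, hn, rfl⟩
      have hre : rep (f n) = hex'.choose := dif_pos hex'
      rw [hre]
      exact hex'.choose_spec
    have hinj : Function.Injective (fun n : ↥N =>
        ((⟨n.1 * x * n.1⁻¹ * x⁻¹, hNcomm n.1 n.2 x hxN⟩ : ↥Z),
         (⟨n.1 * y * n.1⁻¹ * y⁻¹, hNcomm n.1 n.2 y hyN⟩ : ↥Z),
         (⟨(rep (f n.1))⁻¹ * n.1,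
            hfib n.1 (rep (f n.1)) n.2 (hrepN n.1 n.2).1 (hrepN n.1 n.2).2.symm⟩ : ↥Z))) := by
      intro n n' h
      have e1 : n.1 * x * n.1⁻¹ * x⁻¹ = n'.1 * x * n'.1⁻¹ * x⁻¹ :=
        congrArg (fun p => (p.1 : G)) h
      have e2 : n.1 * y * n.1⁻¹ * y⁻¹ = n'.1 * y * n'.1⁻¹ * y⁻¹ :=
        congrArg (fun p => (p.2.1 : G)) h
      have e3 : (rep (f n.1))⁻¹ * n.1 = (rep (f n'.1))⁻¹ * n'.1 :=
        congrArg (fun p => (p.2.2 : G)) h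
      have hfn : f n.1 = f n'.1 := Prod.ext e1 e2
      rw [hfn] at e3
      exact Subtype.ext (mul_left_cancel e3)
    calc Nat.card ↥N ≤ Nat.card (↥Z × ↥Z × ↥Z) := Nat.card_le_card_of_injective _ hinj
      _ = 8 := by rw [Nat.card_prod, Nat.card_prod, hcardZ]
  -- final contradiction via the conjugation orbit of x
  letI : Fintype G := Fintype.ofFinite G
  letI : Fintype ↥(MulAction.orbit (ConjAct G) x) := Fintype.ofFinite _
  letI : Fintype ↥(MulAction.stabilizer (ConjAct G) x) := Fintype.ofFinite _
  have horb : (MulAction.orbit (ConjAct G) x : Set G) ⊆ (N : Set G) := by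
    rintro z ⟨g, rfl⟩
    have hz : g • x ∈ N := by
      rw [ConjAct.smul_def]
      exact hNnormal.conj_mem x hxN (ConjAct.ofConjAct g)
    exact hz
  have h1 : Nat.card ↥(MulAction.orbit (ConjAct G) x) ≤ 8 :=
    le_trans (Nat.card_le_card_of_injective _ (Set.inclusion_injective horb)) hcardN
  have h2 : Nat.card ↥(MulAction.stabilizer (ConjAct G) x) ≤ 2 * q := by
    rw [card_stabilizer_eq_card_centralizer]
    exact hbound x hxZ
  have horbstab := MulAction.card_orbit_mul_card_stabilizer_eq_card_group (ConjAct G) x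
  have hfinal : Nat.card G ≤ 8 * (2 * q) := by
    calc Nat.card G = Fintype.card (ConjAct G) := Nat.card_eq_fintype_card
      _ = _ * _ := horbstab.symm
      _ ≤ 8 * (2 * q) := Nat.mul_le_mul
          (by rw [← Nat.card_eq_fintype_card]; exact h1)
          (by rw [← Nat.card_eq_fintype_card]; exact h2)
  rw [hcardG] at hfinal
  exact arith2 q hq5 (Nat.sub_le_iff_le_add.mp hfinal)

end CaseB

-- existence of a unit with square ≠ 1
lemma exists_unit_sq_ne_one {F : Type*} [Field F] [Fintype F] [DecidableEq F]
    (h4 : 4 ≤ Fintype.card F) (hF2 : (2 : F) ≠ 0) : ∃ a : Fˣ, (a : F) ^ 2 ≠ 1 := by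
  by_contra hcon
  push_neg at hcon
  have hinj : Function.Injective (fun a : Fˣ => (⟨(a : F), hcon a⟩ : {r : F // r ^ 2 = 1})) := by
    intro a b hab
    exact Units.ext (congrArg Subtype.val hab)
  have hle := Nat.card_le_card_of_injective _ hinj
  rw [card_sq_one_s14 hF2, Nat.card_eq_fintype_card, Fintype.card_units] at hle
  omega

theorem not_solvable_of_noncommuting_graph_iso_sl
    (q : ℕ) (hq : IsPrimePow q) (hq5 : 5 ≤ q) (hqo : Odd q)
    (F : Type*) [Field F] [Fintype F] (hF : Fintype.card F = q)
    (G : Type*) [Group G]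
    (φ : noncommutingGraph G ≃g
      noncommutingGraph (Matrix.SpecialLinearGroup (Fin 2) F)) :
    ¬ IsSolvable G := by
  classical
  intro hsolv
  letI : DecidableEq F := Classical.decEq F
  -- characteristic is not 2
  have hF2 : (2 : F) ≠ 0 := by
    intro h2
    have hchar : ringChar F = 2 :=
      CharP.ringChar_of_prime_eq_zero Nat.prime_two (by exact_mod_cast h2)
    have heven := FiniteField.even_card_iff_char_two.mp hchar
    rw [hF] at heven
    obtain ⟨m, hm⟩ := hqo
    omega
  have hq4 : 4 ≤ Fintype.card F := by rw [hF]; omega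
  obtain ⟨a, ha⟩ := exists_unit_sq_ne_one hq4 hF2
  -- finiteness of G
  haveI : Finite {x : G // x ∉ Subgroup.center G} := Finite.of_equiv _ φ.toEquiv.symm
  haveI hGfin : Finite G :=
    finite_of_finite_noncentral ⟨φ.symm ⟨unipSL, unipSL_noncentral⟩⟩
  -- cardinal bookkeeping
  set z := Nat.card ↥(Subgroup.center G) with hzdef
  set n := Nat.card {x : G // x ∉ Subgroup.center G} with hndef
  have hzpos : 1 ≤ z := by
    rw [hzdef]
    exact Nat.one_le_iff_ne_zero.mpr (Nat.card_ne_zero.mpr ⟨⟨1, Subgroup.one_mem _⟩, inferInstance⟩)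
  have hcardsplitG : Nat.card G = z + n := card_split_s14
  have hnVS : n = Nat.card {x : Matrix.SpecialLinearGroup (Fin 2) F //
      x ∉ Subgroup.center (Matrix.SpecialLinearGroup (Fin 2) F)} := Nat.card_congr φ.toEquiv
  have hSLcard : Nat.card (Matrix.SpecialLinearGroup (Fin 2) F) = q ^ 3 - q := by
    rw [card_SL2, hF]
  have hcardsplitS : Nat.card (Matrix.SpecialLinearGroup (Fin 2) F)
      = 2 + Nat.card {x : Matrix.SpecialLinearGroup (Fin 2) F //
          x ∉ Subgroup.center (Matrix.SpecialLinearGroup (Fin 2) F)} := by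
    rw [card_split_s14 (G := Matrix.SpecialLinearGroup (Fin 2) F), card_center_SL2 hF2]
  have hn2 : n + 2 = q ^ 3 - q := by
    rw [hnVS, ← hSLcard, hcardsplitS, Nat.add_comm]
  -- transfer of commuting-neighbourhood sizes
  have hs : ∀ v : {x : G // x ∉ Subgroup.center G},
      Nat.card {w : {x : G // x ∉ Subgroup.center G} // Commute v.1 w.1}
        = Nat.card {w : {x : Matrix.SpecialLinearGroup (Fin 2) F //
            x ∉ Subgroup.center (Matrix.SpecialLinearGroup (Fin 2) F)} //
              Commute (φ v).1 w.1} := by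
    intro v
    apply Nat.card_congr
    refine Equiv.subtypeEquiv φ.toEquiv ?_
    intro w
    constructor
    · intro hc
      by_contra hnc
      have hadj : (noncommutingGraph (Matrix.SpecialLinearGroup (Fin 2) F)).Adj (φ v) (φ w) := hnc
      exact (φ.map_adj_iff.mp hadj) hc
    · intro hc
      by_contra hnc
      have hadj : (noncommutingGraph G).Adj v w := hnc
      exact (φ.map_adj_iff.mpr hadj) hc
  have hcent : ∀ v : {x : G // x ∉ Subgroup.center G},
      Nat.card ↥(Subgroup.centralizer ({v.1} : Set G))
        = z + Nat.card {w : {x : Matrix.SpecialLinearGroup (Fin 2) F //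
            x ∉ Subgroup.center (Matrix.SpecialLinearGroup (Fin 2) F)} //
              Commute (φ v).1 w.1} := by
    intro v
    rw [centralizer_split v.1, ← hs v, hzdef]
  have hcentSL : ∀ u : {x : Matrix.SpecialLinearGroup (Fin 2) F //
      x ∉ Subgroup.center (Matrix.SpecialLinearGroup (Fin 2) F)},
      Nat.card ↥(Subgroup.centralizer ({u.1} : Set (Matrix.SpecialLinearGroup (Fin 2) F)))
        = 2 + Nat.card {w : {x : Matrix.SpecialLinearGroup (Fin 2) F //
            x ∉ Subgroup.center (Matrix.SpecialLinearGroup (Fin 2) F)} //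
              Commute u.1 w.1} := by
    intro u
    rw [centralizer_split u.1, card_center_SL2 hF2]
  -- AC transfer
  have hACG : ∀ x y w : G, x ∉ Subgroup.center G → Commute x y → Commute x w → Commute y w := by
    intro x y w hx hxy hxw
    by_cases hy : y ∈ Subgroup.center G
    · exact ((Subgroup.mem_center_iff.mp hy) w).symm
    by_cases hw : w ∈ Subgroup.center G
    · exact (Subgroup.mem_center_iff.mp hw) y
    have key : ∀ (u v : {x : G // x ∉ Subgroup.center G}), Commute u.1 v.1 →
        Commute (φ u).1 (φ v).1 := by
      intro u v hc
      by_contra hnc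
      have hadj : (noncommutingGraph (Matrix.SpecialLinearGroup (Fin 2) F)).Adj (φ u) (φ v) := hnc
      exact (φ.map_adj_iff.mp hadj) hc
    have h1 := key ⟨x, hx⟩ ⟨y, hy⟩ hxy
    have h2 := key ⟨x, hx⟩ ⟨w, hw⟩ hxw
    have h3 := SL2_AC _ _ _ (φ ⟨x, hx⟩).2 h1 h2
    by_contra hnc
    have hadj : (noncommutingGraph G).Adj ⟨y, hy⟩ ⟨w, hw⟩ := hnc
    exact (φ.map_adj_iff.mpr hadj) h3
  -- the diagonal vertex
  have hsd2 : ∃ sd, (2 + sd = q - 1 ∧ z ∣ sd ∧ (z + sd) ∣ (z + n)) := by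
    refine ⟨Nat.card {w : {x : Matrix.SpecialLinearGroup (Fin 2) F //
        x ∉ Subgroup.center (Matrix.SpecialLinearGroup (Fin 2) F)} //
          Commute (φ (φ.symm ⟨diagSL a, diagSL_noncentral a ha⟩)).1 w.1}, ?_, ?_, ?_⟩
    · have h1 := hcentSL ⟨diagSL a, diagSL_noncentral a ha⟩
      rw [card_diag_centralizer a ha, hF] at h1
      rw [φ.apply_symm_apply]
      exact h1.symm
    · have hle := Subgroup.card_dvd_of_le
        (Subgroup.center_le_centralizer ({(φ.symm ⟨diagSL a, diagSL_noncentral a ha⟩).1} : Set G))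
      rw [hcent (φ.symm ⟨diagSL a, diagSL_noncentral a ha⟩), ← hzdef] at hle
      exact (Nat.dvd_add_right dvd_rfl).mp hle
    · have hdvd := Subgroup.card_subgroup_dvd_card
        (Subgroup.centralizer ({(φ.symm ⟨diagSL a, diagSL_noncentral a ha⟩).1} : Set G))
      rw [hcent (φ.symm ⟨diagSL a, diagSL_noncentral a ha⟩), hcardsplitG] at hdvd
      exact hdvd
  -- the unipotent vertex
  have hsu2 : ∃ su, (2 + su = 2 * q ∧ z ∣ su ∧ (z + su) ∣ (z + n)) := by
    refine ⟨Nat.card {w : {x : Matrix.SpecialLinearGroup (Fin 2) F //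
        x ∉ Subgroup.center (Matrix.SpecialLinearGroup (Fin 2) F)} //
          Commute (φ (φ.symm ⟨unipSL, unipSL_noncentral⟩)).1 w.1}, ?_, ?_, ?_⟩
    · have h1 := hcentSL ⟨unipSL, unipSL_noncentral⟩
      rw [card_unip_centralizer hF2, hF] at h1
      rw [φ.apply_symm_apply]
      exact h1.symm
    · have hle := Subgroup.card_dvd_of_le
        (Subgroup.center_le_centralizer ({(φ.symm ⟨unipSL, unipSL_noncentral⟩).1} : Set G))
      rw [hcent (φ.symm ⟨unipSL, unipSL_noncentral⟩), ← hzdef] at hle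
      exact (Nat.dvd_add_right dvd_rfl).mp hle
    · have hdvd := Subgroup.card_subgroup_dvd_card
        (Subgroup.centralizer ({(φ.symm ⟨unipSL, unipSL_noncentral⟩).1} : Set G))
      rw [hcent (φ.symm ⟨unipSL, unipSL_noncentral⟩), hcardsplitG] at hdvd
      exact hdvd
  obtain ⟨sd, hsdq, hzsd, hsddvd⟩ := hsd2
  obtain ⟨su, hsuq, hzsu, hsudvd⟩ := hsu2
  -- z divides 4
  have hz4 : z ∣ 4 := by
    have h1 : z ∣ 2 * sd := hzsd.mul_left 2
    have h2 : z ∣ su - 2 * sd := Nat.dvd_sub hzsu h1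
    have h3 : su - 2 * sd = 4 := by omega
    rwa [h3] at h2
  have hz124 : z = 1 ∨ z = 2 ∨ z = 4 := by
    have hz4' : z ≤ 4 := Nat.le_of_dvd (by norm_num) hz4
    interval_cases z <;> omega
  -- helpful : cube fact
  have hqq : q ≤ q ^ 3 := Nat.le_self_pow (by norm_num) q
  obtain ⟨Q3, hQ3⟩ : ∃ m, q ^ 3 = m := ⟨q ^ 3, rfl⟩
  rw [hQ3] at hn2 hqq
  rcases hz124 with hz | hz | hz
  · -- z = 1 : contradiction via 2q-1 ∣ q³-q-1
    rw [hz] at hsudvd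
    have hcast : ((1 + su : ℕ) : ℤ) ∣ ((1 + n : ℕ) : ℤ) := Int.natCast_dvd_natCast.mpr hsudvd
    have he1 : ((1 + su : ℕ) : ℤ) = 2 * (q : ℤ) - 1 := by
      have h : (2 : ℤ) + su = 2 * q := by exact_mod_cast hsuq
      push_cast
      omega
    have he2 : ((1 + n : ℕ) : ℤ) = (q : ℤ) ^ 3 - q - 1 := by
      have h1 : (n : ℤ) + 2 = (Q3 : ℤ) - q := by
        have hq3q : q ≤ Q3 := hqq
        have hc := congrArg (fun t : ℕ => (t : ℤ)) hn2
        push_cast [Nat.cast_sub hq3q] at hc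
        omega
      have h2 : ((q : ℤ)) ^ 3 = (Q3 : ℤ) := by exact_mod_cast congrArg (fun t : ℕ => (t : ℤ)) hQ3
      push_cast
      rw [h2]
      omega
    rw [he1, he2] at hcast
    have hdvd11 : (2 * (q : ℤ) - 1) ∣ 11 := by
      have hh : (11 : ℤ) = (4 * (q : ℤ) ^ 2 + 2 * q - 3) * (2 * (q : ℤ) - 1)
          - 8 * ((q : ℤ) ^ 3 - q - 1) := by ring
      rw [hh]
      exact dvd_sub (Dvd.intro_left _ rfl) (hcast.mul_left 8)
    have hle11 : 2 * (q : ℤ) - 1 ≤ 11 := Int.le_of_dvd (by norm_num) hdvd11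
    have hq6 : q ≤ 6 := by exact_mod_cast by omega
    obtain ⟨m, hm⟩ := hqo
    have hq5' : q = 5 := by omega
    rw [hq5'] at hdvd11
    norm_num at hdvd11
  · -- z = 2 : main case
    have hcardG : Nat.card G = q ^ 3 - q := by
      rw [hcardsplitG, hz, Nat.add_comm, hn2, hQ3]
    have hboundG : ∀ x : G, x ∉ Subgroup.center G →
        Nat.card ↥(Subgroup.centralizer ({x} : Set G)) ≤ 2 * q := by
      intro x hx
      have h1 := hcent ⟨x, hx⟩
      have h2 := hcentSL (φ ⟨x, hx⟩)
      have h3 := card_centralizer_le (φ ⟨x, hx⟩).1 (φ ⟨x, hx⟩).2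
      rw [hF] at h3
      rw [h2] at h3
      rw [h1, hz]
      exact h3
    exact caseB q hq5 hcardG (hz ▸ rfl) hACG hboundG hsolv
      ⟨(φ.symm ⟨unipSL, unipSL_noncentral⟩).1, (φ.symm ⟨unipSL, unipSL_noncentral⟩).2⟩
  · -- z = 4 : contradiction via q+1 ∣ q³-q+2
    rw [hz] at hsddvd
    have hcast : ((4 + sd : ℕ) : ℤ) ∣ ((4 + n : ℕ) : ℤ) := Int.natCast_dvd_natCast.mpr hsddvd
    have he1 : ((4 + sd : ℕ) : ℤ) = (q : ℤ) + 1 := by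
      have hq1 : (1 : ℕ) ≤ q := by omega
      have hc := congrArg (fun t : ℕ => (t : ℤ)) hsdq
      push_cast [Nat.cast_sub hq1] at hc
      push_cast
      omega
    have he2 : ((4 + n : ℕ) : ℤ) = (q : ℤ) ^ 3 - q + 2 := by
      have h1 : (n : ℤ) + 2 = (Q3 : ℤ) - q := by
        have hq3q : q ≤ Q3 := hqq
        have hc := congrArg (fun t : ℕ => (t : ℤ)) hn2
        push_cast [Nat.cast_sub hq3q] at hc
        omega
      have h2 : ((q : ℤ)) ^ 3 = (Q3 : ℤ) := by exact_mod_cast congrArg (fun t : ℕ => (t : ℤ)) hQ3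
      push_cast
      rw [h2]
      omega
    rw [he1, he2] at hcast
    have hdvd2 : ((q : ℤ) + 1) ∣ 2 := by
      have hh : (2 : ℤ) = ((q : ℤ) ^ 3 - q + 2) - ((q : ℤ) ^ 2 - q) * ((q : ℤ) + 1) := by ring
      rw [hh]
      exact dvd_sub hcast (Dvd.intro_left _ rfl)
    have hle2 : (q : ℤ) + 1 ≤ 2 := Int.le_of_dvd (by norm_num) hdvd2
    have : (5 : ℤ) ≤ (q : ℤ) := by exact_mod_cast hq5
    omega
end
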